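/- arXiv:2604.20741 — 6 statements merged into one kernel-verified Lean document; each statement's English description precedes it below -/
import Mathlib

section
/- Let (S, μ) be a σ-finite measure space and let f_1, …, f_N : S → ℝ be measurable functions that are square-integrable with respect to μ. Then det ( (∫_S f_i f_j dμ)_{1 ≤ i,j ≤ N} ) = (1/N!) ∫_{S^N} ( det ( f_j(z_i) )_{1 ≤ i,j ≤ N} )² dμ^{⊗N}(z_1, …, z_N), where μ^{⊗N} denotes the N-fold product measure on S^N. -/
open MeasureTheory Equiv Finset

private lemma perm_sum_lemma {N : ℕ} (G : Matrix (Fin N) (Fin N) ℝ) :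
    ∑ σ : Perm (Fin N), ∑ τ : Perm (Fin N),
      ((Perm.sign σ : ℤ) : ℝ) * ((Perm.sign τ : ℤ) : ℝ) * ∏ i, G (σ⁻¹ i) (τ⁻¹ i)
    = (N.factorial : ℝ) * G.det := by
  have step1 : ∑ σ : Perm (Fin N), ∑ τ : Perm (Fin N),
      ((Perm.sign σ : ℤ) : ℝ) * ((Perm.sign τ : ℤ) : ℝ) * ∏ i, G (σ⁻¹ i) (τ⁻¹ i)
      = ∑ σ : Perm (Fin N), ∑ τ : Perm (Fin N),
      ((Perm.sign σ : ℤ) : ℝ) * ((Perm.sign τ : ℤ) : ℝ) * ∏ i, G (σ i) (τ i) := by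
    refine Fintype.sum_equiv (Equiv.inv _) _ _ fun σ => ?_
    refine Fintype.sum_equiv (Equiv.inv _) _ _ fun τ => ?_
    simp [Perm.sign_inv]
  rw [step1]
  have key : ∀ σ : Perm (Fin N),
      ∑ τ : Perm (Fin N), ((Perm.sign σ : ℤ) : ℝ) * ((Perm.sign τ : ℤ) : ℝ)
        * ∏ i, G (σ i) (τ i) = G.det := by
    intro σ
    rw [← Matrix.det_transpose G, Matrix.det_apply']
    refine (Fintype.sum_equiv (Equiv.mulRight σ) _ _ fun ρ => ?_).symm
    have h1 : ∏ i, G (σ i) ((ρ * σ) i) = ∏ j, G j (ρ j) := by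
      rw [← Equiv.prod_comp σ fun j => G j (ρ j)]
      rfl
    have hs : ((Perm.sign σ : ℤ) : ℝ) * ((Perm.sign σ : ℤ) : ℝ) = 1 := by
      have hz : ((Perm.sign σ : ℤ)) * ((Perm.sign σ : ℤ)) = 1 := by
        rw [← Units.val_mul, Int.units_mul_self, Units.val_one]
      exact_mod_cast hz
    simp only [Equiv.coe_mulRight, Perm.sign_mul, Units.val_mul, Int.cast_mul, h1,
      Matrix.transpose_apply]
    linear_combination (-(((Perm.sign ρ : ℤ) : ℝ) * ∏ x, G x (ρ x))) * hs
  simp only [key, Finset.sum_const, Finset.card_univ, Fintype.card_perm, Fintype.card_fin,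
    nsmul_eq_mul]

/-- Andréief–Heine identity, symmetric case. For square-integrable
measurable functions `f 1, …, f N` on a σ-finite measure space,
`det (∫ f i * f j dμ) = (1/N!) ∫_{S^N} (det (f j (z i)))² dμ^⊗N`. -/
theorem gram_det_eq_integral_vandermonde_sq
    {S : Type*} [MeasurableSpace S] (μ : Measure S) [SigmaFinite μ] (N : ℕ)
    (f : Fin N → S → ℝ) (hmeas : ∀ i, Measurable (f i))
    (hL2 : ∀ i, MemLp (f i) 2 μ) :
    (Matrix.of fun i j : Fin N => ∫ s, f i s * f j s ∂μ).det
      = (1 / (N.factorial : ℝ)) *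
        ∫ z : Fin N → S, ((Matrix.of fun i j : Fin N => f j (z i)).det) ^ 2
          ∂(Measure.pi fun _ => μ) := by
  letI : MeasureSpace S := ⟨μ⟩
  haveI : SigmaFinite (volume : Measure S) := ‹SigmaFinite μ›
  -- pairwise products are integrable
  have hint : ∀ i j, Integrable (fun s => f i s * f j s) μ := by
    intro i j
    have h12 : (1 : ENNReal) / 1 = 1 / 2 + 1 / 2 := by
      simp [one_div, ENNReal.inv_two_add_inv_two]
    have := ((hL2 j).smul (hL2 i) (hpqr := ⟨by rw [ENNReal.inv_two_add_inv_two, inv_one]⟩) : MemLp (f i • f j) 1 μ)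
    rw [memLp_one_iff_integrable] at this
    exact this
  set G : Matrix (Fin N) (Fin N) ℝ := Matrix.of fun i j : Fin N => ∫ s, f i s * f j s ∂μ with hG
  -- expand the squared determinant
  have hexp : ∀ z : Fin N → S,
      ((Matrix.of fun i j : Fin N => f j (z i)).det) ^ 2
      = ∑ p : Perm (Fin N) × Perm (Fin N),
          ((Perm.sign p.1 : ℤ) : ℝ) * ((Perm.sign p.2 : ℤ) : ℝ)
            * ∏ i, (f (p.1⁻¹ i) (z i) * f (p.2⁻¹ i) (z i)) := by
    intro z
    have hprod : ∀ σ : Perm (Fin N), ∏ i, f i (z (σ i)) = ∏ i, f (σ⁻¹ i) (z i) := by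
      intro σ
      rw [← Equiv.prod_comp σ fun j => f (σ⁻¹ j) (z j)]
      simp
    rw [sq, Matrix.det_apply', Finset.sum_mul_sum, ← Fintype.sum_prod_type']
    refine Finset.sum_congr rfl fun p _ => ?_
    simp only [Matrix.of_apply, hprod, Finset.prod_mul_distrib]
    ring
  -- integrability of each summand
  have hintp : ∀ p : Perm (Fin N) × Perm (Fin N),
      Integrable (fun z : Fin N → S =>
        ((Perm.sign p.1 : ℤ) : ℝ) * ((Perm.sign p.2 : ℤ) : ℝ)
          * ∏ i, (f (p.1⁻¹ i) (z i) * f (p.2⁻¹ i) (z i))) (Measure.pi fun _ => μ) := by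
    intro p
    exact (Integrable.fintype_prod (f := fun i s => f (p.1⁻¹ i) s * f (p.2⁻¹ i) s)
      (fun i => hint _ _)).const_mul _
  calc G.det
      = (1 / (N.factorial : ℝ)) * ((N.factorial : ℝ) * G.det) := by
        field_simp [Nat.factorial_ne_zero]
    _ = (1 / (N.factorial : ℝ)) *
        ∫ z : Fin N → S, ((Matrix.of fun i j : Fin N => f j (z i)).det) ^ 2
          ∂(Measure.pi fun _ => μ) := by
        congr 1
        rw [← perm_sum_lemma G]
        have : ∫ z : Fin N → S, ((Matrix.of fun i j : Fin N => f j (z i)).det) ^ 2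
            ∂(Measure.pi fun _ => μ)
            = ∑ p : Perm (Fin N) × Perm (Fin N),
              ∫ z : Fin N → S, ((Perm.sign p.1 : ℤ) : ℝ) * ((Perm.sign p.2 : ℤ) : ℝ)
                * ∏ i, (f (p.1⁻¹ i) (z i) * f (p.2⁻¹ i) (z i)) ∂(Measure.pi fun _ => μ) := by
          rw [← integral_finset_sum _ fun p _ => hintp p]
          exact integral_congr_ae (Filter.Eventually.of_forall fun z => hexp z)
        rw [this, ← Fintype.sum_prod_type']
        refine Finset.sum_congr rfl fun p _ => ?_
        have hfub : ∫ z : Fin N → S, ∏ i, (f (p.1⁻¹ i) (z i) * f (p.2⁻¹ i) (z i))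
              ∂(Measure.pi fun _ => μ)
            = ∏ i, ∫ s, f (p.1⁻¹ i) s * f (p.2⁻¹ i) s ∂μ :=
          integral_fintype_prod_eq_prod (fun i s => f (p.1⁻¹ i) s * f (p.2⁻¹ i) s)
        rw [MeasureTheory.integral_const_mul, hfub]
        rfl
end

section
/- Let (S, μ) be a σ-finite measure space with μ(S) < ∞, and let f_1, …, f_N : S → ℝ be measurable square-integrable functions. Let Q be the N×N matrix with entries Q_{ij} = ∫_S f_i f_j dμ, and let t = sup { |det( f_j(z_i) )_{1 ≤ i,j ≤ N}| : z_1, …, z_N ∈ S }. Then |det Q| ≤ (μ(S)^N / N!) · t². In particular, if N! ≥ μ(S)^N, then |det Q| ≤ t². -/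
open MeasureTheory
open scoped ENNReal

/-- For a finite measure `μ` on a σ-finite measure space and
square-integrable measurable functions `f 1, …, f N`, the Gram determinant satisfies
`|det Q| ≤ μ(S)^N / N! · t²` where `t` is the supremum of the absolute generalized
Vandermonde determinant over `S^N`; in particular `|det Q| ≤ t²` once `μ(S)^N ≤ N!`. -/
theorem abs_gram_det_le_vandermonde_sup_sq
    {S : Type*} [MeasurableSpace S] (μ : Measure S) [SigmaFinite μ]
    (hfin : μ Set.univ < ⊤) (N : ℕ)
    (f : Fin N → S → ℝ) (hmeas : ∀ i, Measurable (f i))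
    (hL2 : ∀ i, MemLp (f i) 2 μ)
    (t : ℝ≥0∞)
    (ht : t = ⨆ z : Fin N → S,
      (‖(Matrix.of fun i j : Fin N => f j (z i)).det‖₊ : ℝ≥0∞)) :
    ENNReal.ofReal |(Matrix.of fun i j : Fin N => ∫ s, f i s * f j s ∂μ).det|
        ≤ (μ Set.univ) ^ N / (N.factorial : ℝ≥0∞) * t ^ 2 ∧
      ((μ Set.univ) ^ N ≤ (N.factorial : ℝ≥0∞) →
        ENNReal.ofReal |(Matrix.of fun i j : Fin N => ∫ s, f i s * f j s ∂μ).det|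
          ≤ t ^ 2) := by
  classical
  letI : MeasureSpace S := ⟨μ⟩
  haveI : SigmaFinite (volume : Measure S) := ‹SigmaFinite μ›
  set M : (Fin N → S) → Matrix (Fin N) (Fin N) ℝ :=
    fun z => Matrix.of fun i j : Fin N => f j (z i) with hMdef
  set Q : Matrix (Fin N) (Fin N) ℝ :=
    Matrix.of fun i j : Fin N => ∫ s, f i s * f j s ∂μ with hQdef
  -- products of two of the functions are integrable
  have hint : ∀ i j, Integrable (fun s => f i s * f j s) μ := by
    intro i j
    have h := memLp_one_iff_integrable.mp ((hL2 j).smul (hL2 i) (p := 2) (q := 2) (r := 1))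
    simp only [smul_eq_mul] at h
    exact h
  -- products over coordinates are integrable on the product space
  have hPint : ∀ σ τ : Equiv.Perm (Fin N),
      Integrable (fun x : Fin N → S => ∏ j, f (σ j) (x j) * f (τ j) (x j)) :=
    fun σ τ =>
      Integrable.fintype_prod (f := fun j x => f (σ j) x * f (τ j) x)
        (fun j => hint (σ j) (τ j))
  have hPval : ∀ σ τ : Equiv.Perm (Fin N),
      (∫ x : Fin N → S, ∏ j, f (σ j) (x j) * f (τ j) (x j)) =
        ∏ j, ∫ s, f (σ j) s * f (τ j) s ∂μ :=
    fun σ τ =>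
      integral_fintype_prod_eq_prod (fun j x => f (σ j) x * f (τ j) x)
  -- expansion of the squared determinant
  have hdetM : ∀ x : Fin N → S, (M x).det =
      ∑ σ : Equiv.Perm (Fin N), ((σ.sign : ℤ) : ℝ) * ∏ j, f (σ j) (x j) := by
    intro x
    rw [← Matrix.det_transpose, Matrix.det_apply']
    rfl
  have hsq : ∀ x : Fin N → S, (M x).det ^ 2 =
      ∑ σ : Equiv.Perm (Fin N), ∑ τ : Equiv.Perm (Fin N),
        ((σ.sign : ℤ) : ℝ) * ((τ.sign : ℤ) : ℝ) *
          ∏ j, f (σ j) (x j) * f (τ j) (x j) := by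
    intro x
    rw [sq, hdetM, Finset.sum_mul_sum]
    refine Finset.sum_congr rfl fun σ _ => Finset.sum_congr rfl fun τ _ => ?_
    rw [Finset.prod_mul_distrib]
    ring
  have hint2 : Integrable (fun x : Fin N → S => (M x).det ^ 2) := by
    have h : (fun x : Fin N → S => (M x).det ^ 2) =
        fun x => ∑ σ : Equiv.Perm (Fin N), ∑ τ : Equiv.Perm (Fin N),
          ((σ.sign : ℤ) : ℝ) * ((τ.sign : ℤ) : ℝ) *
            ∏ j, f (σ j) (x j) * f (τ j) (x j) := funext hsq
    rw [h]
    exact integrable_finset_sum _ fun σ _ =>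
      integrable_finset_sum _ fun τ _ => (hPint σ τ).const_mul _
  -- the Andréief identity
  have key : (∫ x : Fin N → S, (M x).det ^ 2) = (N.factorial : ℝ) * Q.det := by
    have hQ : Q.det = ∑ ρ : Equiv.Perm (Fin N),
        ((ρ.sign : ℤ) : ℝ) * ∏ i, ∫ s, f (ρ i) s * f i s ∂μ := by
      rw [Matrix.det_apply']; rfl
    calc (∫ x : Fin N → S, (M x).det ^ 2)
        = ∑ σ : Equiv.Perm (Fin N), ∑ τ : Equiv.Perm (Fin N),
            ((σ.sign : ℤ) : ℝ) * ((τ.sign : ℤ) : ℝ) *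
              ∏ j, ∫ s, f (σ j) s * f (τ j) s ∂μ := by
          simp_rw [hsq]
          rw [integral_finset_sum _ (fun σ _ =>
            integrable_finset_sum _ (fun τ _ => (hPint σ τ).const_mul _))]
          refine Finset.sum_congr rfl fun σ _ => ?_
          rw [integral_finset_sum _ (fun τ _ => (hPint σ τ).const_mul _)]
          refine Finset.sum_congr rfl fun τ _ => ?_
          rw [integral_const_mul, hPval σ τ]
      _ = ∑ _τ : Equiv.Perm (Fin N), Q.det := by
          rw [Finset.sum_comm]
          refine Finset.sum_congr rfl fun τ _ => ?_
          rw [hQ, ← Equiv.sum_comp (Equiv.mulRight τ)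
            (fun σ : Equiv.Perm (Fin N) => ((σ.sign : ℤ) : ℝ) * ((τ.sign : ℤ) : ℝ) *
              ∏ j, ∫ s, f (σ j) s * f (τ j) s ∂μ)]
          refine Finset.sum_congr rfl fun ρ _ => ?_
          have hττ : ((τ.sign : ℤ) : ℝ) * ((τ.sign : ℤ) : ℝ) = 1 := by
            rcases Int.units_eq_one_or τ.sign with h | h <;> simp [h]
          have hsign : (((ρ * τ).sign : ℤ) : ℝ) =
              ((ρ.sign : ℤ) : ℝ) * ((τ.sign : ℤ) : ℝ) := by
            rw [Equiv.Perm.sign_mul]; push_cast; ring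
          have hprod : (∏ j, ∫ s, f ((ρ * τ) j) s * f (τ j) s ∂μ) =
              ∏ i, ∫ s, f (ρ i) s * f i s ∂μ := by
            simp_rw [Equiv.Perm.mul_apply]
            exact Equiv.prod_comp τ (fun i => ∫ s, f (ρ i) s * f i s ∂μ)
          simp only [Equiv.coe_mulRight]
          rw [hsign, hprod, mul_assoc ((ρ.sign : ℤ) : ℝ), hττ, mul_one]
      _ = (N.factorial : ℝ) * Q.det := by
          rw [Finset.sum_const, Finset.card_univ, Fintype.card_perm, Fintype.card_fin,
            nsmul_eq_mul]
  have hpos : (0 : ℝ) ≤ ∫ x : Fin N → S, (M x).det ^ 2 :=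
    integral_nonneg fun x => sq_nonneg _
  have hfacpos : (0 : ℝ) < (N.factorial : ℝ) := by
    exact_mod_cast N.factorial_pos
  have hQdet_eq : Q.det = (∫ x : Fin N → S, (M x).det ^ 2) / (N.factorial : ℝ) := by
    rw [key]; field_simp
  -- bound the integral in ℝ≥0∞
  have hvolpi : (volume : Measure (Fin N → S)) Set.univ = μ Set.univ ^ N := by
    rw [volume_pi, Measure.pi_univ]
    simp [Finset.prod_const]
    rfl
  have hbound : ENNReal.ofReal (∫ x : Fin N → S, (M x).det ^ 2)
      ≤ μ Set.univ ^ N * t ^ 2 := by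
    have h1 : ENNReal.ofReal (∫ x : Fin N → S, (M x).det ^ 2)
        ≤ ∫⁻ x : Fin N → S, ENNReal.ofReal ((M x).det ^ 2) := by
      rw [integral_eq_lintegral_of_nonneg_ae (Filter.Eventually.of_forall fun x => sq_nonneg _)
        hint2.1]
      exact ENNReal.ofReal_toReal_le
    have h2 : (∫⁻ x : Fin N → S, ENNReal.ofReal ((M x).det ^ 2)) ≤
        ∫⁻ _ : Fin N → S, t ^ 2 := by
      refine lintegral_mono fun x => ?_
      have hle : (‖(M x).det‖₊ : ℝ≥0∞) ≤ t := by
        rw [ht]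
        exact le_iSup (fun z : Fin N → S => (‖(M z).det‖₊ : ℝ≥0∞)) x
      have : ENNReal.ofReal ((M x).det ^ 2) = (‖(M x).det‖₊ : ℝ≥0∞) ^ 2 := by
        rw [show ((M x).det) ^ 2 = |(M x).det| ^ 2 from (sq_abs _).symm,
          ENNReal.ofReal_pow (abs_nonneg _), ← Real.enorm_eq_ofReal_abs, enorm_eq_nnnorm]
      rw [this]
      exact pow_le_pow_left' hle 2
    calc ENNReal.ofReal (∫ x : Fin N → S, (M x).det ^ 2)
        ≤ ∫⁻ _ : Fin N → S, t ^ 2 := h1.trans h2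
      _ = t ^ 2 * μ Set.univ ^ N := by rw [lintegral_const, hvolpi]
      _ = μ Set.univ ^ N * t ^ 2 := mul_comm _ _
  have habs : ENNReal.ofReal |Q.det| =
      ENNReal.ofReal (∫ x : Fin N → S, (M x).det ^ 2) / (N.factorial : ℝ≥0∞) := by
    rw [hQdet_eq, abs_of_nonneg (div_nonneg hpos hfacpos.le),
      ENNReal.ofReal_div_of_pos hfacpos, ENNReal.ofReal_natCast]
  have main : ENNReal.ofReal |Q.det|
      ≤ μ Set.univ ^ N / (N.factorial : ℝ≥0∞) * t ^ 2 := by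
    rw [habs]
    calc ENNReal.ofReal (∫ x : Fin N → S, (M x).det ^ 2) / (N.factorial : ℝ≥0∞)
        ≤ (μ Set.univ ^ N * t ^ 2) / (N.factorial : ℝ≥0∞) :=
          ENNReal.div_le_div_right hbound _
      _ = μ Set.univ ^ N / (N.factorial : ℝ≥0∞) * t ^ 2 := by
          rw [div_eq_mul_inv, div_eq_mul_inv, mul_right_comm]
  refine ⟨main, fun h => main.trans ?_⟩
  have hdiv : μ Set.univ ^ N / (N.factorial : ℝ≥0∞) ≤ 1 :=
    ENNReal.div_le_of_le_mul (by simpa using h)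
  calc μ Set.univ ^ N / (N.factorial : ℝ≥0∞) * t ^ 2
      ≤ 1 * t ^ 2 := mul_le_mul_left hdiv _
    _ = t ^ 2 := one_mul _
end

section
/- Let S be a set and τ ⊆ S. For each n ≥ 1 let F_n be a list of r_n functions S → ℂ and G_n a list of s_n functions S → ℂ, with r_n, s_n ≥ 1, and let H_n be the list of the r_n s_n pairwise products of a function of F_n with a function of G_n. Let e^F_n, e^G_n, e^H_n be positive integers such that e^H_n / (r_n s_n · log(r_n s_n)) → ∞, e^F_n s_n / e^H_n → α, and e^G_n r_n / e^H_n → β as n → ∞, with α, β ≥ 0. Assume that t_{F_n}(τ) and t_{G_n}(τ) are finite for each n, and that A = limsup_n t_{F_n}(τ)^{1/e^F_n} and B = limsup_n t_{G_n}(τ)^{1/e^G_n} are finite and strictly positive. Then limsup_n t_{H_n}(τ)^{1/e^H_n} ≤ A^α · B^β. -/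
open Filter
open scoped ENNReal NNReal

/-- The Vandermonde supremum `t_{(m_1,…,m_N)}(τ)`: the supremum over all tuples
`z : ι → S` of points of `τ` of the absolute value of the generalized Vandermonde
determinant `det (m j (z i))`, valued in `[0, ∞]`. -/
noncomputable def vandSup {S ι : Type*} [Fintype ι] [DecidableEq ι]
    (τ : Set S) (m : ι → S → ℂ) : ℝ≥0∞ :=
  ⨆ (z : ι → S) (_ : ∀ i, z i ∈ τ),
    (‖(Matrix.of fun i j : ι => m j (z i)).det‖₊ : ℝ≥0∞)


lemma nnnorm_le_vandSup {S ι : Type*} [Fintype ι] [DecidableEq ι]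
    (τ : Set S) (m : ι → S → ℂ) (z : ι → S) (hz : ∀ i, z i ∈ τ) :
    (‖(Matrix.of fun i j : ι => m j (z i)).det‖₊ : ℝ≥0∞) ≤ vandSup τ m := by
  unfold vandSup
  exact le_iSup₂ (f := fun z (_ : ∀ i, z i ∈ τ) =>
    (‖(Matrix.of fun i j : ι => m j (z i)).det‖₊ : ℝ≥0∞)) z hz

lemma nnnorm_det_le {ι : Type*} [Fintype ι] [DecidableEq ι] (M : Matrix ι ι ℂ) (K : ℝ≥0)
    (h : ∀ i j, ‖M i j‖₊ ≤ K) :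
    ‖M.det‖₊ ≤ (Nat.factorial (Fintype.card ι) : ℝ≥0) * K ^ (Fintype.card ι) := by
  rw [Matrix.det_apply]
  refine le_trans (nnnorm_sum_le _ _) ?_
  have hb : ∀ σ : Equiv.Perm ι, ‖Equiv.Perm.sign σ • ∏ i, M (σ i) i‖₊ ≤ K ^ (Fintype.card ι) := by
    intro σ
    have h1 : ‖Equiv.Perm.sign σ • ∏ i, M (σ i) i‖₊ = ‖∏ i, M (σ i) i‖₊ := by
      rcases Int.units_eq_one_or (Equiv.Perm.sign σ) with h' | h' <;> simp [h']
    rw [h1, nnnorm_prod]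
    calc ∏ i, ‖M (σ i) i‖₊ ≤ ∏ _i : ι, K := Finset.prod_le_prod' fun i _ => h (σ i) i
      _ = K ^ (Fintype.card ι) := by simp [Finset.prod_const, Finset.card_univ]
  calc ∑ σ : Equiv.Perm ι, ‖Equiv.Perm.sign σ • ∏ i, M (σ i) i‖₊
      ≤ ∑ _σ : Equiv.Perm ι, K ^ (Fintype.card ι) := Finset.sum_le_sum fun σ _ => hb σ
    _ = (Nat.factorial (Fintype.card ι) : ℝ≥0) * K ^ (Fintype.card ι) := by
        simp [Finset.sum_const, Finset.card_univ, Fintype.card_perm, nsmul_eq_mul]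

lemma det_eq_zero_of_rows_tensor {r s : ℕ} (hs : 0 < s)
    (v : Fin r × Fin s → Fin r → ℂ) (w : Fin r × Fin s → Fin s → ℂ)
    (hU : Module.finrank ℂ (Submodule.span ℂ (Set.range v)) < r) :
    (Matrix.of fun i j : Fin r × Fin s => v i j.1 * w i j.2).det = 0 := by
  have hr : 0 < r := lt_of_le_of_lt (Nat.zero_le _) hU
  by_contra hdet
  set U := Submodule.span ℂ (Set.range v) with hUdef
  set ψ : (Fin s → U) →ₗ[ℂ] (Fin r × Fin s → ℂ) :=
    { toFun := fun u => fun p => (u p.2 : Fin r → ℂ) p.1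
      map_add' := by intro u1 u2; funext p; simp
      map_smul' := by intro c u1; funext p; simp } with hψ
  have hmem : ∀ i, (Matrix.of fun i j : Fin r × Fin s => v i j.1 * w i j.2) i
      ∈ LinearMap.range ψ := by
    intro i
    refine ⟨fun b => ⟨w i b • v i, Submodule.smul_mem _ _ (Submodule.subset_span ⟨i, rfl⟩)⟩, ?_⟩
    funext p
    simp [hψ, mul_comm]
  have hli : LinearIndependent ℂ
      (fun i => (Matrix.of fun i j : Fin r × Fin s => v i j.1 * w i j.2) i) :=
    Matrix.linearIndependent_rows_iff_isUnit.2
      ((Matrix.isUnit_iff_isUnit_det _).2 (Ne.isUnit hdet))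
  have hli' : LinearIndependent ℂ
      (fun i => (⟨_, hmem i⟩ : LinearMap.range ψ)) :=
    LinearIndependent.of_comp (LinearMap.range ψ).subtype hli
  have hcard := hli'.fintype_card_le_finrank
  have h1 : Module.finrank ℂ (LinearMap.range ψ) ≤ Module.finrank ℂ (Fin s → U) :=
    LinearMap.finrank_range_le ψ
  have h2 : Module.finrank ℂ (Fin s → U) = s * Module.finrank ℂ U := by
    rw [Module.finrank_pi_fintype ℂ]
    simp [Finset.sum_const, Finset.card_univ, mul_comm]
  have h3 : s * Module.finrank ℂ U ≤ s * (r - 1) :=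
    Nat.mul_le_mul_left s (Nat.le_sub_one_of_lt hU)
  have hchain : r * s ≤ s * (r - 1) := by
    calc r * s = Fintype.card (Fin r × Fin s) := by simp
      _ ≤ Module.finrank ℂ (LinearMap.range ψ) := hcard
      _ ≤ Module.finrank ℂ (Fin s → U) := h1
      _ = s * Module.finrank ℂ U := h2
      _ ≤ s * (r - 1) := h3
  have hlt : s * (r - 1) < s * r := (Nat.mul_lt_mul_left hs).2 (Nat.sub_lt hr Nat.one_pos)
  rw [mul_comm] at hchain
  exact absurd (lt_of_le_of_lt hchain hlt) (lt_irrefl _)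

lemma exists_points_det_ne_zero {S : Type*} {r : ℕ} {ι : Type*} [Fintype ι]
    (F : Fin r → S → ℂ) (z : ι → S)
    (hrk : r ≤ Module.finrank ℂ
      (Submodule.span ℂ (Set.range fun i => fun a => F a (z i)))) :
    ∃ x : Fin r → ι, (Matrix.of fun a j : Fin r => F j (z (x a))).det ≠ 0 := by
  set vv : ι → (Fin r → ℂ) := fun i => fun a => F a (z i) with hvv
  obtain ⟨b, hbsub, hbspan, hbind⟩ := exists_linearIndependent ℂ (Set.range vv)
  have hbfin : b.Finite := (Set.finite_range vv).subset hbsub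
  haveI : Fintype b := hbfin.fintype
  have hcard : r ≤ b.toFinset.card := by
    rw [← finrank_span_set_eq_card hbind, hbspan]; exact hrk
  obtain ⟨t, htsub, htcard⟩ := Finset.exists_subset_card_eq hcard
  have e : Fin r ≃ t := (Finset.equivFinOfCardEq htcard).symm
  have hmemb : ∀ a : Fin r, (((e a : t) : Fin r → ℂ)) ∈ b := by
    intro a
    exact Set.mem_toFinset.1 (htsub (e a).2)
  -- the vectors
  set u : Fin r → (Fin r → ℂ) := fun a => ((e a : t) : Fin r → ℂ) with hu
  have hui : LinearIndependent ℂ u := by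
    have hg : Function.Injective (fun a : Fin r => (⟨u a, hmemb a⟩ : b)) := by
      intro a1 a2 h12
      apply e.injective
      apply Subtype.ext
      show u a1 = u a2
      exact congrArg (fun q : b => (q : Fin r → ℂ)) h12
    have := hbind.comp (fun a : Fin r => (⟨u a, hmemb a⟩ : b)) hg
    exact this
  have hmemr : ∀ a : Fin r, u a ∈ Set.range vv := fun a => hbsub (hmemb a)
  choose x hx using fun a => (hmemr a)
  refine ⟨x, ?_⟩
  have hrows : (fun a => (Matrix.of fun a j : Fin r => F j (z (x a))) a) = u := by
    funext a
    exact hx a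
  have : LinearIndependent ℂ (fun a => (Matrix.of fun a j : Fin r => F j (z (x a))) a) := by
    rw [hrows]; exact hui
  have := Matrix.linearIndependent_rows_iff_isUnit.1 this
  exact ((Matrix.isUnit_iff_isUnit_det _).1 this).ne_zero

lemma vandSup_tensor_eq_zero_left {S : Type*} (τ : Set S) {r s : ℕ} (hs : 0 < s)
    (F : Fin r → S → ℂ) (G : Fin s → S → ℂ) (hF0 : vandSup τ F = 0) :
    vandSup τ (fun p : Fin r × Fin s => fun u => F p.1 u * G p.2 u) = 0 := by
  refine le_antisymm (iSup₂_le fun z hz => ?_) zero_le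
  suffices hdet : (Matrix.of fun i j : Fin r × Fin s =>
      (fun p : Fin r × Fin s => fun u => F p.1 u * G p.2 u) j (z i)).det = 0 by
    simp [hdet]
  have hU : Module.finrank ℂ
      (Submodule.span ℂ (Set.range fun i : Fin r × Fin s => fun a => F a (z i))) < r := by
    by_contra hcon
    push_neg at hcon
    obtain ⟨x, hx⟩ := exists_points_det_ne_zero F z hcon
    have hle := nnnorm_le_vandSup τ F (fun a => z (x a)) (fun a => hz (x a))
    rw [hF0, nonpos_iff_eq_zero, ENNReal.coe_eq_zero, nnnorm_eq_zero] at hle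
    exact hx hle
  exact det_eq_zero_of_rows_tensor hs
    (fun i : Fin r × Fin s => fun a => F a (z i))
    (fun i : Fin r × Fin s => fun b => G b (z i)) hU

lemma vandSup_tensor_eq_zero_right {S : Type*} (τ : Set S) {r s : ℕ} (hr : 0 < r)
    (F : Fin r → S → ℂ) (G : Fin s → S → ℂ) (hG0 : vandSup τ G = 0) :
    vandSup τ (fun p : Fin r × Fin s => fun u => F p.1 u * G p.2 u) = 0 := by
  refine le_antisymm (iSup₂_le fun z hz => ?_) zero_le
  suffices hdet : (Matrix.of fun i j : Fin r × Fin s =>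
      (fun p : Fin r × Fin s => fun u => F p.1 u * G p.2 u) j (z i)).det = 0 by
    simp [hdet]
  set e : Fin s × Fin r ≃ Fin r × Fin s := Equiv.prodComm _ _ with he
  have hsub : (Matrix.of fun i j : Fin r × Fin s =>
        (fun p : Fin r × Fin s => fun u => F p.1 u * G p.2 u) j (z i)).det
      = ((Matrix.of fun i j : Fin r × Fin s =>
        (fun p : Fin r × Fin s => fun u => F p.1 u * G p.2 u) j (z i)).submatrix e e).det :=
    (Matrix.det_submatrix_equiv_self e _).symm
  rw [hsub]
  have heq : ((Matrix.of fun i j : Fin r × Fin s =>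
        (fun p : Fin r × Fin s => fun u => F p.1 u * G p.2 u) j (z i)).submatrix e e)
      = (Matrix.of fun i j : Fin s × Fin r =>
          G j.1 ((z ∘ e) i) * F j.2 ((z ∘ e) i)) := by
    ext i j
    simp [Matrix.submatrix_apply, he, mul_comm]
  rw [heq]
  -- now apply the left lemma's core with roles swapped
  have hU : Module.finrank ℂ
      (Submodule.span ℂ (Set.range fun i : Fin s × Fin r => fun b => G b ((z ∘ e) i))) < s := by
    by_contra hcon
    push_neg at hcon
    obtain ⟨x, hx⟩ := exists_points_det_ne_zero G (z ∘ e) hcon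
    have hle := nnnorm_le_vandSup τ G (fun b => (z ∘ e) (x b)) (fun b => hz (e (x b)))
    rw [hG0, nonpos_iff_eq_zero, ENNReal.coe_eq_zero, nnnorm_eq_zero] at hle
    exact hx hle
  exact det_eq_zero_of_rows_tensor hr
    (fun i : Fin s × Fin r => fun b => G b ((z ∘ e) i))
    (fun i : Fin s × Fin r => fun a => F a ((z ∘ e) i)) hU
lemma exists_coeffs {S : Type*} (τ : Set S) {r : ℕ} (F : Fin r → S → ℂ)
    (hfin : vandSup τ F ≠ ⊤) (h0 : vandSup τ F ≠ 0) :
    ∃ (x : Fin r → S) (c : S → Fin r → ℂ),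
      (∀ a, x a ∈ τ) ∧
      (∀ u j, ∑ a, c u a * F j (x a) = F j u) ∧
      (∀ u ∈ τ, ∀ a, ‖c u a‖₊ ≤ 2) := by
  set tF := (vandSup τ F).toNNReal with htFdef
  have htF : (tF : ℝ≥0∞) = vandSup τ F := ENNReal.coe_toNNReal hfin
  have htF0 : tF ≠ 0 := fun h => h0 (by rw [← htF, h]; simp)
  have hhalf : ((tF / 2 : ℝ≥0) : ℝ≥0∞) < vandSup τ F := by
    rw [← htF]
    exact_mod_cast NNReal.half_lt_self htF0
  rw [vandSup, lt_iSup_iff] at hhalf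
  obtain ⟨x, hx2⟩ := hhalf
  rw [lt_iSup_iff] at hx2
  obtain ⟨hx, hlt⟩ := hx2
  set V := Matrix.of fun a j : Fin r => F j (x a) with hV
  have hVd : tF / 2 < ‖V.det‖₊ := by exact_mod_cast hlt
  have hhalfpos : 0 < tF / 2 := by positivity
  have hVne : V.det ≠ 0 := by
    intro h
    rw [h, nnnorm_zero] at hVd
    exact absurd hVd (by simp)
  set c : S → Fin r → ℂ := fun u => (V.det)⁻¹ • (Matrix.cramer V.transpose (fun j => F j u)) with hc
  refine ⟨x, c, hx, ?_, ?_⟩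
  · intro u j
    have h2 : ∑ a, V.transpose j a * (Matrix.cramer V.transpose (fun j' => F j' u)) a = V.det * F j u := by
      have h := congrFun (Matrix.mulVec_cramer V.transpose (fun j' => F j' u)) j
      simpa [Matrix.mulVec, dotProduct, Matrix.det_transpose] using h
    calc ∑ a, c u a * F j (x a)
        = (V.det)⁻¹ * ∑ a, V.transpose j a * (Matrix.cramer V.transpose (fun j' => F j' u)) a := by
          rw [Finset.mul_sum]
          refine Finset.sum_congr rfl fun a _ => ?_
          simp only [hc, Pi.smul_apply, smul_eq_mul, Matrix.transpose_apply, hV, Matrix.of_apply]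
          ring
      _ = F j u := by rw [h2, ← mul_assoc, inv_mul_cancel₀ hVne, one_mul]
  · intro u hu a
    have hca : c u a = (V.det)⁻¹ * (V.updateRow a fun j => F j u).det := by
      simp [hc, Matrix.cramer_transpose_apply]
    have hupd : V.updateRow a (fun j => F j u)
        = Matrix.of fun i j => F j (Function.update x a u i) := by
      ext i j
      rcases eq_or_ne i a with h | h
      · subst h; simp [Matrix.updateRow_apply, Function.update_apply]
      · simp [Matrix.updateRow_apply, Function.update_apply, h, hV]
    have hmem : ∀ i, Function.update x a u i ∈ τ := by
      intro i
      rcases eq_or_ne i a with h | h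
      · subst h; simp [Function.update_apply, hu]
      · simp [Function.update_apply, h, hx i]
    have hbd : ‖(V.updateRow a fun j => F j u).det‖₊ ≤ tF := by
      have := nnnorm_le_vandSup τ F (Function.update x a u) hmem
      rw [← htF, ENNReal.coe_le_coe] at this
      rw [hupd]
      exact this
    rw [hca, nnnorm_mul, nnnorm_inv]
    calc ‖V.det‖₊⁻¹ * ‖(V.updateRow a fun j => F j u).det‖₊
        ≤ (tF / 2)⁻¹ * tF := by
          refine mul_le_mul' ?_ hbd
          rw [← one_div, ← one_div]
          exact one_div_le_one_div_of_le hhalfpos hVd.le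
      _ = 2 := by
          rw [inv_div, div_mul_cancel₀ _ htF0]

lemma vandSup_tensor_le {S : Type*} (τ : Set S) {r s : ℕ} (hr : 0 < r) (hs : 0 < s)
    (F : Fin r → S → ℂ) (G : Fin s → S → ℂ)
    (hF : vandSup τ F ≠ ⊤) (hG : vandSup τ G ≠ ⊤) :
    vandSup τ (fun p : Fin r × Fin s => fun u => F p.1 u * G p.2 u)
      ≤ ((((r * s).factorial * 4 ^ (r * s) : ℝ≥0)) : ℝ≥0∞)
          * vandSup τ F ^ s * vandSup τ G ^ r := by
  rcases eq_or_ne (vandSup τ F) 0 with hF0 | hF0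
  · rw [vandSup_tensor_eq_zero_left τ hs F G hF0]; exact zero_le
  rcases eq_or_ne (vandSup τ G) 0 with hG0 | hG0
  · rw [vandSup_tensor_eq_zero_right τ hr F G hG0]; exact zero_le
  obtain ⟨x, cF, hx, hcFeq, hcFbd⟩ := exists_coeffs τ F hF hF0
  obtain ⟨y, cG, hy, hcGeq, hcGbd⟩ := exists_coeffs τ G hG hG0
  refine iSup₂_le fun z hz => ?_
  set V : Matrix (Fin r) (Fin r) ℂ := Matrix.of fun a j => F j (x a) with hV
  set W : Matrix (Fin s) (Fin s) ℂ := Matrix.of fun c b => G b (y c) with hW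
  set C : Matrix (Fin r × Fin s) (Fin r × Fin s) ℂ :=
    Matrix.of fun i p => cF (z i) p.1 * cG (z i) p.2 with hC
  have hfact : (Matrix.of fun i j : Fin r × Fin s =>
      (fun p : Fin r × Fin s => fun u => F p.1 u * G p.2 u) j (z i))
      = C * Matrix.kroneckerMap (· * ·) V W := by
    ext i j
    rw [Matrix.mul_apply]
    rw [Fintype.sum_prod_type]
    have : ∀ a c, C i (a, c) * Matrix.kroneckerMap (· * ·) V W (a, c) j
        = (cF (z i) a * F j.1 (x a)) * (cG (z i) c * G j.2 (y c)) := by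
      intro a c
      simp only [hC, Matrix.of_apply, Matrix.kroneckerMap_apply, hV, hW]
      ring
    simp only [this]
    rw [← Finset.sum_mul_sum]
    rw [hcFeq (z i) j.1, hcGeq (z i) j.2]
    simp
  calc (‖(Matrix.of fun i j : Fin r × Fin s =>
        (fun p : Fin r × Fin s => fun u => F p.1 u * G p.2 u) j (z i)).det‖₊ : ℝ≥0∞)
      = (‖C.det‖₊ : ℝ≥0∞) * (‖V.det‖₊ : ℝ≥0∞) ^ s * (‖W.det‖₊ : ℝ≥0∞) ^ r := by
        rw [hfact, Matrix.det_mul, Matrix.det_kronecker]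
        simp only [Fintype.card_fin]
        push_cast [nnnorm_mul, nnnorm_pow]
        ring
    _ ≤ ((((r * s).factorial * 4 ^ (r * s) : ℝ≥0)) : ℝ≥0∞)
          * vandSup τ F ^ s * vandSup τ G ^ r := by
        refine mul_le_mul' (mul_le_mul' ?_ ?_) ?_
        · have hCd : ‖C.det‖₊ ≤ ((r * s).factorial : ℝ≥0) * 4 ^ (r * s) := by
            have hcard : Fintype.card (Fin r × Fin s) = r * s := by simp
            have := nnnorm_det_le C 4 ?_
            · rwa [hcard] at this
            · intro i p
              rw [hC]
              simp only [Matrix.of_apply, nnnorm_mul]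
              calc ‖cF (z i) p.1‖₊ * ‖cG (z i) p.2‖₊ ≤ 2 * 2 :=
                mul_le_mul' (hcFbd (z i) (hz i) p.1) (hcGbd (z i) (hz i) p.2)
                _ = 4 := by norm_num
          exact_mod_cast hCd
        · exact pow_le_pow_left' (nnnorm_le_vandSup τ F x hx) s
        · exact pow_le_pow_left' (nnnorm_le_vandSup τ G y hy) r

lemma rpow_pow_aux (v : ℝ≥0∞) (s eF eH : ℕ) (heF : 0 < eF) (heH : 0 < eH) :
    (v ^ s) ^ (1/(eH:ℝ)) = (v ^ (1/(eF:ℝ))) ^ (((eF:ℝ) * (s:ℝ))/(eH:ℝ)) := by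
  rw [← ENNReal.rpow_natCast v s, ← ENNReal.rpow_mul, ← ENNReal.rpow_mul]
  congr 1
  have h1 : (eF:ℝ) ≠ 0 := by positivity
  have h2 : (eH:ℝ) ≠ 0 := by positivity
  field_simp

lemma tendsto_const_rpow {x : ℝ≥0∞} (hx0 : x ≠ 0) (hxt : x ≠ ⊤) {p : ℕ → ℝ} {γ : ℝ}
    (hp : Tendsto p atTop (nhds γ)) :
    Tendsto (fun n => x ^ p n) atTop (nhds (x ^ γ)) := by
  set a := x.toNNReal with ha
  have hxa : (a : ℝ≥0∞) = x := ENNReal.coe_toNNReal hxt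
  have ha0 : a ≠ 0 := fun h => hx0 (by rw [← hxa, h]; simp)
  have hreal : Tendsto (fun n => (a:ℝ) ^ p n) atTop (nhds ((a:ℝ) ^ γ)) :=
    Tendsto.rpow tendsto_const_nhds hp (Or.inl (by exact_mod_cast ha0))
  have hnn : Tendsto (fun n => a ^ p n) atTop (nhds (a ^ γ)) := by
    rw [← NNReal.tendsto_coe]
    simpa [NNReal.coe_rpow] using hreal
  have hco := ENNReal.tendsto_coe.2 hnn
  have heq : ∀ n, ((a ^ p n : ℝ≥0) : ℝ≥0∞) = x ^ p n := fun n => by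
    rw [ENNReal.coe_rpow_of_ne_zero ha0, hxa]
  have heq2 : ((a ^ γ : ℝ≥0) : ℝ≥0∞) = x ^ γ := by
    rw [ENNReal.coe_rpow_of_ne_zero ha0, hxa]
  rw [← heq2]
  exact Tendsto.congr heq hco

lemma tendsto_const_part (r s eH : ℕ → ℕ) (hr : ∀ n, 1 ≤ r n) (hs : ∀ n, 1 ≤ s n)
    (heH : ∀ n, 0 < eH n)
    (hgrow : Tendsto
      (fun n => (eH n : ℝ) / (((r n : ℝ) * (s n : ℝ)) * Real.log ((r n : ℝ) * (s n : ℝ))))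
      atTop atTop) :
    Tendsto (fun n => ((((r n * s n).factorial * 4 ^ (r n * s n) : ℝ≥0)) : ℝ≥0∞)
      ^ (1/(eH n : ℝ))) atTop (nhds 1) := by
  set c : ℕ → ℝ≥0 := fun n => ((r n * s n).factorial * 4 ^ (r n * s n) : ℝ≥0) with hcdef
  have hc1 : ∀ n, (1:ℝ≥0) ≤ c n := by
    intro n
    have h1 : (1:ℝ≥0) ≤ ((r n * s n).factorial : ℝ≥0) :=
      Nat.one_le_cast.2 (Nat.factorial_pos _)
    have h2 : (1:ℝ≥0) ≤ 4 ^ (r n * s n) := one_le_pow₀ (by norm_num)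
    calc (1:ℝ≥0) = 1 * 1 := (one_mul 1).symm
      _ ≤ _ := mul_le_mul' h1 h2
  have hcne : ∀ n, c n ≠ 0 := fun n => by
    intro h
    have h1n := hc1 n
    rw [h] at h1n
    exact absurd h1n (by norm_num)
  have hL1 : ∀ n, (1:ℝ) ≤ (c n : ℝ) := fun n => by exact_mod_cast hc1 n
  have hLpos : ∀ n, (0:ℝ) < (c n : ℝ) := fun n => lt_of_lt_of_le one_pos (hL1 n)
  -- reduce to real
  suffices hreal : Tendsto (fun n => (c n : ℝ) ^ (1/(eH n : ℝ))) atTop (nhds 1) by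
    have hnn : Tendsto (fun n => c n ^ (1/(eH n : ℝ))) atTop (nhds 1) := by
      rw [← NNReal.tendsto_coe]
      simpa [NNReal.coe_rpow] using hreal
    have hco := ENNReal.tendsto_coe.2 hnn
    have heq : ∀ n, ((c n ^ (1/(eH n:ℝ)) : ℝ≥0) : ℝ≥0∞) = (c n : ℝ≥0∞) ^ (1/(eH n:ℝ)) :=
      fun n => ENNReal.coe_rpow_of_ne_zero (hcne n) _
    exact Tendsto.congr heq hco
  -- logs
  have hrw : ∀ n, (c n : ℝ) ^ (1/(eH n:ℝ))
      = Real.exp (Real.log (c n : ℝ) * (1/(eH n:ℝ))) := fun n =>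
    Real.rpow_def_of_pos (hLpos n) _
  suffices hlog : Tendsto (fun n => Real.log ((c n : ℝ)) * (1/(eH n:ℝ))) atTop (nhds 0) by
    have hcomp := (Real.continuous_exp.tendsto 0).comp hlog
    rw [Real.exp_zero] at hcomp
    exact Tendsto.congr (fun n => (hrw n).symm) hcomp
  -- eventual N ≥ 2
  have hev2 : ∀ᶠ n in atTop, (2:ℝ) ≤ (r n : ℝ) * (s n : ℝ) := by
    refine (hgrow.eventually_ge_atTop 1).mono fun n h1 => ?_
    by_contra h2
    push_neg at h2
    have hnat : ((r n * s n : ℕ) : ℝ) = (r n : ℝ) * (s n : ℝ) := by push_cast; ring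
    have hge1 : 1 ≤ r n * s n := Nat.one_le_iff_ne_zero.2 (by
      have := hr n; have := hs n; positivity)
    have hlt2 : r n * s n < 2 := by
      by_contra h3
      push_neg at h3
      have : (2:ℝ) ≤ ((r n * s n : ℕ) : ℝ) := by exact_mod_cast h3
      rw [hnat] at this
      exact absurd this (not_le.2 h2)
    have heq1 : r n * s n = 1 := by omega
    have hone : (r n : ℝ) * (s n : ℝ) = 1 := by rw [← hnat, heq1]; norm_num
    rw [hone] at h1
    simp [Real.log_one] at h1
    exact absurd h1 (by norm_num)
  -- upper bound
  have hub : ∀ᶠ n in atTop, Real.log ((c n : ℝ)) * (1/(eH n:ℝ))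
      ≤ 3 * ((((r n : ℝ) * (s n : ℝ)) * Real.log ((r n : ℝ) * (s n : ℝ))) / (eH n : ℝ)) := by
    refine hev2.mono fun n h2 => ?_
    set N := r n * s n with hN
    have hNr : ((N : ℕ) : ℝ) = (r n : ℝ) * (s n : ℝ) := by
      simp only [hN, Nat.cast_mul]
    set Nr : ℝ := (r n : ℝ) * (s n : ℝ) with hNrdef
    have hNrpos : (0:ℝ) < Nr := lt_of_lt_of_le two_pos h2
    have hcle : (c n : ℝ) ≤ (4 * Nr) ^ N := by
      have h1 : ((N.factorial : ℕ) : ℝ) ≤ (Nr) ^ N := by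
        calc ((N.factorial : ℕ) : ℝ) ≤ ((N ^ N : ℕ) : ℝ) := by
              exact_mod_cast Nat.factorial_le_pow N
          _ = Nr ^ N := by rw [← hNr]; push_cast; ring
      have hcval : (c n : ℝ) = ((N.factorial : ℕ) : ℝ) * 4 ^ N := by
        simp only [hcdef, ← hN, NNReal.coe_mul, NNReal.coe_pow, NNReal.coe_natCast,
          NNReal.coe_ofNat]
      rw [hcval]
      calc ((N.factorial : ℕ) : ℝ) * 4 ^ N ≤ Nr ^ N * 4 ^ N := by
            exact mul_le_mul_of_nonneg_right h1 (by positivity)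
        _ = (4 * Nr) ^ N := by rw [← mul_pow]; ring_nf
    have hlogle : Real.log (c n : ℝ) ≤ (N : ℝ) * Real.log (4 * Nr) := by
      calc Real.log (c n : ℝ) ≤ Real.log ((4 * Nr) ^ N) :=
            Real.log_le_log (hLpos n) hcle
        _ = (N : ℝ) * Real.log (4 * Nr) := by rw [Real.log_pow]
    have hlog4 : Real.log (4 * Nr) ≤ 3 * Real.log Nr := by
      rw [Real.log_mul (by norm_num) hNrpos.ne']
      have h4 : Real.log 4 ≤ 2 * Real.log Nr := by
        have : Real.log 4 = 2 * Real.log 2 := by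
          rw [show (4:ℝ) = 2 ^ 2 by norm_num, Real.log_pow]
          norm_num
        rw [this]
        have := Real.log_le_log (by norm_num : (0:ℝ) < 2) h2
        linarith
      linarith
    have hlogNr0 : 0 ≤ Real.log Nr :=
      Real.log_nonneg (le_trans (by norm_num) h2)
    have hlogc0 : 0 ≤ Real.log (c n : ℝ) := Real.log_nonneg (hL1 n)
    have hNnn : (0:ℝ) ≤ (N:ℝ) := by positivity
    have hfinal : Real.log (c n : ℝ) ≤ 3 * (Nr * Real.log Nr) := by
      calc Real.log (c n : ℝ) ≤ (N : ℝ) * Real.log (4 * Nr) := hlogle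
        _ ≤ (N : ℝ) * (3 * Real.log Nr) :=
            mul_le_mul_of_nonneg_left hlog4 hNnn
        _ = 3 * (Nr * Real.log Nr) := by rw [hNr]; ring
    have heH0 : (0:ℝ) ≤ 1/(eH n : ℝ) := by positivity
    calc Real.log ((c n : ℝ)) * (1/(eH n:ℝ))
        ≤ (3 * (Nr * Real.log Nr)) * (1/(eH n:ℝ)) :=
          mul_le_mul_of_nonneg_right hfinal heH0
      _ = 3 * ((Nr * Real.log Nr) / (eH n : ℝ)) := by ring
  have hx0 : Tendsto (fun n => (((r n : ℝ) * (s n : ℝ)) * Real.log ((r n : ℝ) * (s n : ℝ)))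
      / (eH n : ℝ)) atTop (nhds 0) := by
    have hinv := hgrow.inv_tendsto_atTop
    refine Tendsto.congr (fun n => ?_) hinv
    rw [Pi.inv_apply, inv_div]
  have hg3 : Tendsto (fun n => 3 * ((((r n : ℝ) * (s n : ℝ))
      * Real.log ((r n : ℝ) * (s n : ℝ))) / (eH n : ℝ))) atTop (nhds 0) := by
    simpa using hx0.const_mul (3:ℝ)
  refine squeeze_zero' (Eventually.of_forall fun n => ?_) hub hg3
  have : 0 ≤ Real.log (c n : ℝ) := Real.log_nonneg (hL1 n)
  positivity

/-- Upper bound for the supremal transfinite diameter of a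
tensor product of sequences of lists of functions:
`limsup t_{H_n}(τ)^{1/e^H_n} ≤ A^α · B^β`. -/
theorem limsup_vandSup_tensor_le
    {S : Type*} (τ : Set S) (r s : ℕ → ℕ)
    (hr : ∀ n, 1 ≤ r n) (hs : ∀ n, 1 ≤ s n)
    (F : ∀ n, Fin (r n) → S → ℂ) (G : ∀ n, Fin (s n) → S → ℂ)
    (eF eG eH : ℕ → ℕ)
    (heF : ∀ n, 0 < eF n) (heG : ∀ n, 0 < eG n) (heH : ∀ n, 0 < eH n)
    (hgrow : Tendsto
      (fun n => (eH n : ℝ) / (((r n : ℝ) * (s n : ℝ)) * Real.log ((r n : ℝ) * (s n : ℝ))))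
      atTop atTop)
    (α β : ℝ) (hα : 0 ≤ α) (hβ : 0 ≤ β)
    (hαlim : Tendsto (fun n => ((eF n : ℝ) * (s n : ℝ)) / (eH n : ℝ)) atTop (nhds α))
    (hβlim : Tendsto (fun n => ((eG n : ℝ) * (r n : ℝ)) / (eH n : ℝ)) atTop (nhds β))
    (hFfin : ∀ n, vandSup τ (F n) ≠ ⊤) (hGfin : ∀ n, vandSup τ (G n) ≠ ⊤)
    (A B : ℝ≥0∞)
    (hA : A = limsup (fun n => vandSup τ (F n) ^ (1 / (eF n : ℝ))) atTop)
    (hB : B = limsup (fun n => vandSup τ (G n) ^ (1 / (eG n : ℝ))) atTop)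
    (hA0 : 0 < A) (hAtop : A ≠ ⊤) (hB0 : 0 < B) (hBtop : B ≠ ⊤) :
    limsup (fun n =>
        vandSup τ (fun p : Fin (r n) × Fin (s n) => fun z => F n p.1 z * G n p.2 z)
          ^ (1 / (eH n : ℝ))) atTop
      ≤ A ^ α * B ^ β := by
  set u : ℕ → ℝ≥0∞ := fun n =>
    vandSup τ (fun p : Fin (r n) × Fin (s n) => fun z => F n p.1 z * G n p.2 z)
      ^ (1 / (eH n : ℝ)) with hu
  set pF : ℕ → ℝ := fun n => ((eF n : ℝ) * (s n : ℝ)) / (eH n : ℝ) with hpF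
  set pG : ℕ → ℝ := fun n => ((eG n : ℝ) * (r n : ℝ)) / (eH n : ℝ) with hpG
  have hpF0 : ∀ n, 0 ≤ pF n := fun n => by rw [hpF]; positivity
  have hpG0 : ∀ n, 0 ≤ pG n := fun n => by rw [hpG]; positivity
  set cc : ℕ → ℝ≥0∞ := fun n =>
    ((((r n * s n).factorial * 4 ^ (r n * s n) : ℝ≥0)) : ℝ≥0∞) with hcc
  have hstep : ∀ n, u n ≤ cc n ^ (1/(eH n : ℝ))
      * (vandSup τ (F n) ^ (1/(eF n : ℝ))) ^ (pF n)
      * (vandSup τ (G n) ^ (1/(eG n : ℝ))) ^ (pG n) := by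
    intro n
    have hkey := vandSup_tensor_le τ (hr n) (hs n) (F n) (G n) (hFfin n) (hGfin n)
    have h1 := ENNReal.rpow_le_rpow hkey (by positivity : (0:ℝ) ≤ 1/(eH n : ℝ))
    rw [ENNReal.mul_rpow_of_ne_top
        (ENNReal.mul_ne_top ENNReal.coe_ne_top (ENNReal.pow_ne_top (hFfin n)))
        (ENNReal.pow_ne_top (hGfin n)),
      ENNReal.mul_rpow_of_ne_top ENNReal.coe_ne_top (ENNReal.pow_ne_top (hFfin n)),
      rpow_pow_aux (vandSup τ (F n)) (s n) (eF n) (eH n) (heF n) (heH n),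
      rpow_pow_aux (vandSup τ (G n)) (r n) (eG n) (eH n) (heG n) (heH n)] at h1
    exact h1
  have hc1 : Tendsto (fun n => cc n ^ (1/(eH n : ℝ))) atTop (nhds 1) :=
    tendsto_const_part r s eH hr hs heH hgrow
  have hmain : ∀ ε : ℝ≥0, 0 < ε →
      limsup u atTop ≤ (A + (ε : ℝ≥0∞)) ^ α * (B + (ε : ℝ≥0∞)) ^ β := by
    intro ε hε
    set A' : ℝ≥0∞ := A + (ε : ℝ≥0∞) with hA'
    set B' : ℝ≥0∞ := B + (ε : ℝ≥0∞) with hB'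
    have hεne : ((ε : ℝ≥0∞)) ≠ 0 := by exact_mod_cast hε.ne'
    have hA'gt : A < A' := ENNReal.lt_add_right hAtop hεne
    have hB'gt : B < B' := ENNReal.lt_add_right hBtop hεne
    have hA'0 : A' ≠ 0 := (hA0.trans_le le_self_add).ne'
    have hB'0 : B' ≠ 0 := (hB0.trans_le le_self_add).ne'
    have hA'top : A' ≠ ⊤ := ENNReal.add_ne_top.2 ⟨hAtop, ENNReal.coe_ne_top⟩
    have hB'top : B' ≠ ⊤ := ENNReal.add_ne_top.2 ⟨hBtop, ENNReal.coe_ne_top⟩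
    have hevF : ∀ᶠ n in atTop, vandSup τ (F n) ^ (1/(eF n : ℝ)) ≤ A' := by
      have hlt : limsup (fun n => vandSup τ (F n) ^ (1 / (eF n : ℝ))) atTop < A' := by
        rw [← hA]; exact hA'gt
      exact (eventually_lt_of_limsup_lt hlt).mono fun n h => h.le
    have hevG : ∀ᶠ n in atTop, vandSup τ (G n) ^ (1/(eG n : ℝ)) ≤ B' := by
      have hlt : limsup (fun n => vandSup τ (G n) ^ (1 / (eG n : ℝ))) atTop < B' := by
        rw [← hB]; exact hB'gt
      exact (eventually_lt_of_limsup_lt hlt).mono fun n h => h.le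
    set w : ℕ → ℝ≥0∞ := fun n => cc n ^ (1/(eH n : ℝ)) * A' ^ (pF n) * B' ^ (pG n) with hw
    have hevw : ∀ᶠ n in atTop, u n ≤ w n := by
      filter_upwards [hevF, hevG] with n h1 h2
      refine (hstep n).trans ?_
      exact mul_le_mul' (mul_le_mul' le_rfl (ENNReal.rpow_le_rpow h1 (hpF0 n)))
        (ENNReal.rpow_le_rpow h2 (hpG0 n))
    have hT2A : Tendsto (fun n => A' ^ (pF n)) atTop (nhds (A' ^ α)) :=
      tendsto_const_rpow hA'0 hA'top hαlim
    have hT2B : Tendsto (fun n => B' ^ (pG n)) atTop (nhds (B' ^ β)) :=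
      tendsto_const_rpow hB'0 hB'top hβlim
    have hA'α0 : A' ^ α ≠ 0 := (ENNReal.rpow_pos (lt_of_lt_of_le hA0 le_self_add) hA'top).ne'
    have hA'αtop : A' ^ α ≠ ⊤ := ENNReal.rpow_ne_top_of_nonneg hα hA'top
    have hB'β0 : B' ^ β ≠ 0 := (ENNReal.rpow_pos (lt_of_lt_of_le hB0 le_self_add) hB'top).ne'
    have t12 := ENNReal.Tendsto.mul hc1 (Or.inl one_ne_zero) hT2A (Or.inr ENNReal.one_ne_top)
    have t123 := ENNReal.Tendsto.mul t12 (Or.inl (by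
        simp only [one_mul]
        exact hA'α0))
      hT2B (Or.inr (by
        simp only [one_mul]
        exact hA'αtop))
    have hwt : Tendsto w atTop (nhds (A' ^ α * B' ^ β)) := by
      simpa only [one_mul] using t123
    calc limsup u atTop ≤ limsup w atTop := limsup_le_limsup hevw
      _ = A' ^ α * B' ^ β := hwt.limsup_eq
  -- pass to the limit ε → 0⁺
  have hbase : Tendsto (fun ε : ℝ≥0 => A + (ε : ℝ≥0∞)) (nhdsWithin 0 (Set.Ioi 0)) (nhds A) := by
    have hcont : Continuous (fun ε : ℝ≥0 => A + (ε : ℝ≥0∞)) :=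
      continuous_const.add ENNReal.continuous_coe
    have := hcont.tendsto 0
    simp only [ENNReal.coe_zero, add_zero] at this
    exact this.mono_left nhdsWithin_le_nhds
  have hbaseB : Tendsto (fun ε : ℝ≥0 => B + (ε : ℝ≥0∞)) (nhdsWithin 0 (Set.Ioi 0)) (nhds B) := by
    have hcont : Continuous (fun ε : ℝ≥0 => B + (ε : ℝ≥0∞)) :=
      continuous_const.add ENNReal.continuous_coe
    have := hcont.tendsto 0
    simp only [ENNReal.coe_zero, add_zero] at this
    exact this.mono_left nhdsWithin_le_nhds
  have hrA : Tendsto (fun ε : ℝ≥0 => (A + (ε : ℝ≥0∞)) ^ α) (nhdsWithin 0 (Set.Ioi 0))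
      (nhds (A ^ α)) := (ENNReal.continuous_rpow_const.tendsto A).comp hbase
  have hrB : Tendsto (fun ε : ℝ≥0 => (B + (ε : ℝ≥0∞)) ^ β) (nhdsWithin 0 (Set.Ioi 0))
      (nhds (B ^ β)) := (ENNReal.continuous_rpow_const.tendsto B).comp hbaseB
  have hAα0 : A ^ α ≠ 0 := (ENNReal.rpow_pos hA0 hAtop).ne'
  have hAαtop : A ^ α ≠ ⊤ := ENNReal.rpow_ne_top_of_nonneg hα hAtop
  have hconv : Tendsto (fun ε : ℝ≥0 => (A + (ε : ℝ≥0∞)) ^ α * (B + (ε : ℝ≥0∞)) ^ β)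
      (nhdsWithin 0 (Set.Ioi 0)) (nhds (A ^ α * B ^ β)) :=
    ENNReal.Tendsto.mul hrA (Or.inl hAα0) hrB (Or.inr hAαtop)
  exact ge_of_tendsto hconv (eventually_mem_nhdsWithin.mono fun ε hε => hmain ε hε)
end

section
/- Let d ≥ 1, let τ ⊆ ℂ^d be a bounded set, and for each n ≥ 1 let F_n be a list of r_n ≥ 1 polynomial functions ℂ^d → ℂ. Let G = (g_1, …, g_s) be a fixed finite list of polynomial functions ℂ^d → ℂ, and let H_n be the list of the r_n · s products f · g_j of a function f of F_n with a function g_j of G. Let e^F_n and e^H_n be positive integers such that e^H_n / (r_n s · log(r_n s)) → ∞ and e^F_n · s / e^H_n → α ≥ 0 as n → ∞. Assume A = limsup_n t_{F_n}(τ)^{1/e^F_n} is finite and strictly positive. Then limsup_n t_{H_n}(τ)^{1/e^H_n} ≤ A^α. -/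
open Filter
open scoped ENNReal

open scoped NNReal

open Finset in
/-- The sign of a permutation, as a complex number. -/
noncomputable def permSgn {ι : Type*} [Fintype ι] [DecidableEq ι] (σ : Equiv.Perm ι) : ℂ :=
  ((Equiv.Perm.sign σ : ℤ) : ℂ)

lemma nnnorm_permSgn {ι : Type*} [Fintype ι] [DecidableEq ι] (σ : Equiv.Perm ι) :
    ‖permSgn σ‖₊ = 1 := by
  rcases Int.units_eq_one_or (Equiv.Perm.sign σ) with h | h <;> simp [permSgn, h]

open Finset in
lemma fiber_sum_eq {S : Type*} {r s : ℕ} (f : Fin r → S → ℂ) (g : Fin s → S → ℂ)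
    (z : Fin r × Fin s → S) (σ₀ : Equiv.Perm (Fin r × Fin s)) :
    ∑ σ ∈ univ.filter
        (fun σ : Equiv.Perm (Fin r × Fin s) =>
          (fun p => (σ.symm p).2) = (fun p => (σ₀.symm p).2)),
        permSgn σ * ∏ q, (f q.1 (z (σ q)) * g q.2 (z (σ q)))
      = permSgn σ₀ * (∏ q, g q.2 (z (σ₀ q))) *
          ∏ j, (Matrix.of fun i i' : Fin r => f i' (z (σ₀ (i, j)))).det := by
  have hre :
      ∑ σ ∈ univ.filter
        (fun σ : Equiv.Perm (Fin r × Fin s) =>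
          (fun p => (σ.symm p).2) = (fun p => (σ₀.symm p).2)),
        permSgn σ * ∏ q, (f q.1 (z (σ q)) * g q.2 (z (σ q)))
      = ∑ π : Fin s → Equiv.Perm (Fin r),
          permSgn (σ₀ * Equiv.prodCongrLeft π) *
            ∏ q, (f q.1 (z ((σ₀ * Equiv.prodCongrLeft π) q)) *
              g q.2 (z ((σ₀ * Equiv.prodCongrLeft π) q))) := by
    refine (Finset.sum_nbij (fun π => σ₀ * Equiv.prodCongrLeft π) ?_ ?_ ?_ ?_).symm
    · intro π _
      simp only [mem_filter, mem_univ, true_and]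
      funext p
      show ((Equiv.prodCongrLeft π).symm (σ₀.symm p)).2 = (σ₀.symm p).2
      rcases σ₀.symm p with ⟨a, b⟩
      rfl
    · intro π _ π' _ h
      have h2 := mul_left_cancel h
      funext j
      ext i
      have := congrArg (fun e : Equiv.Perm (Fin r × Fin s) => (e (i, j)).1) h2
      simp only [Equiv.prodCongrLeft_apply] at this
      exact congrArg Fin.val this
    · rintro σ hσ
      simp only [mem_coe, mem_filter, mem_univ, true_and] at hσ
      have hρ : ∀ q, ((σ₀⁻¹ * σ) q).2 = q.2 := by
        intro q
        have := congrFun hσ (σ q)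
        simp only [Equiv.symm_apply_apply] at this
        show (σ₀⁻¹ (σ q)).2 = q.2
        rw [Equiv.Perm.inv_def]
        exact this.symm
      set ρ := σ₀⁻¹ * σ with hρdef
      have hinj : ∀ j : Fin s, Function.Injective (fun i : Fin r => (ρ (i, j)).1) := by
        intro j i i' h
        have h2 : ρ (i, j) = ρ (i', j) := by
          refine Prod.ext_iff.2 ⟨h, ?_⟩
          rw [hρ (i, j), hρ (i', j)]
        exact (Prod.ext_iff.1 (ρ.injective h2)).1
      refine ⟨fun j => Equiv.ofBijective _ ((Finite.injective_iff_bijective).1 (hinj j)), by simp, ?_⟩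
      apply Equiv.ext
      rintro ⟨i, j⟩
      have h1 : ((ρ (i, j)).1, j) = ρ (i, j) := Prod.ext_iff.2 ⟨rfl, (hρ (i, j)).symm⟩
      simp only [Equiv.Perm.mul_apply, Equiv.prodCongrLeft_apply, Equiv.ofBijective_apply]
      rw [h1, hρdef]
      simp [Equiv.Perm.mul_apply]
    · intro π _
      rfl
  have hterm : ∀ π : Fin s → Equiv.Perm (Fin r),
      permSgn (σ₀ * Equiv.prodCongrLeft π) *
        ∏ q, (f q.1 (z ((σ₀ * Equiv.prodCongrLeft π) q)) *
          g q.2 (z ((σ₀ * Equiv.prodCongrLeft π) q)))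
      = permSgn σ₀ * (∏ q, g q.2 (z (σ₀ q))) *
          ∏ j, (permSgn (π j) * ∏ i, f i (z (σ₀ (π j i, j)))) := by
    intro π
    set τ := Equiv.prodCongrLeft π with hτ
    have hsgn : permSgn (σ₀ * τ) = permSgn σ₀ * ∏ j, permSgn (π j) := by
      simp only [permSgn, hτ, Equiv.Perm.sign_mul, Equiv.Perm.sign_prodCongrLeft]
      push_cast
      ring
    have hg : (∏ q : Fin r × Fin s, g q.2 (z (σ₀ (τ q))))
        = ∏ q : Fin r × Fin s, g q.2 (z (σ₀ q)) := by
      have h1 : ∀ q : Fin r × Fin s,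
          g q.2 (z (σ₀ (τ q))) = (fun q' : Fin r × Fin s => g q'.2 (z (σ₀ q'))) (τ q) := by
        rintro ⟨i, j⟩; rfl
      rw [Finset.prod_congr rfl (fun q _ => h1 q)]
      exact Equiv.prod_comp τ (fun q' : Fin r × Fin s => g q'.2 (z (σ₀ q')))
    have hf : (∏ q : Fin r × Fin s, f q.1 (z (σ₀ (τ q))))
        = ∏ j, ∏ i, f i (z (σ₀ (π j i, j))) := by
      exact Fintype.prod_prod_type_right (γ := ℂ)
        (f := fun q : Fin r × Fin s => f q.1 (z (σ₀ (τ q))))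
    calc permSgn (σ₀ * τ) * ∏ q, (f q.1 (z ((σ₀ * τ) q)) * g q.2 (z ((σ₀ * τ) q)))
        = (permSgn σ₀ * ∏ j, permSgn (π j)) *
            ((∏ q, f q.1 (z (σ₀ (τ q)))) * ∏ q, g q.2 (z (σ₀ (τ q)))) := by
          rw [hsgn, ← Finset.prod_mul_distrib]
          rfl
      _ = permSgn σ₀ * (∏ q, g q.2 (z (σ₀ q))) *
            ∏ j, (permSgn (π j) * ∏ i, f i (z (σ₀ (π j i, j)))) := by
          rw [hg, hf, Finset.prod_mul_distrib]
          ring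
  rw [hre, Finset.sum_congr rfl (fun π _ => hterm π), ← Finset.mul_sum]
  congr 1
  rw [← Fintype.prod_sum
    (fun (j : Fin s) (ρ : Equiv.Perm (Fin r)) => permSgn ρ * ∏ i, f i (z (σ₀ (ρ i, j))))]
  refine Finset.prod_congr rfl fun j _ => ?_
  rw [Matrix.det_apply']
  rfl

open Finset in
lemma det_tensor_bound {S : Type*} {r s : ℕ} (τ : Set S)
    (f : Fin r → S → ℂ) (g : Fin s → S → ℂ) (G : ℝ≥0∞)
    (hG : ∀ j w, w ∈ τ → (‖g j w‖₊ : ℝ≥0∞) ≤ G)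
    (z : Fin r × Fin s → S) (hz : ∀ p, z p ∈ τ) :
    (‖(Matrix.of fun p q : Fin r × Fin s =>
        f q.1 (z p) * g q.2 (z p)).det‖₊ : ℝ≥0∞)
      ≤ (s : ℝ≥0∞) ^ (r * s) * (G ^ (r * s) * (vandSup τ f) ^ s) := by
  classical
  set key : Equiv.Perm (Fin r × Fin s) → ((Fin r × Fin s) → Fin s) :=
    fun σ => fun p => (σ.symm p).2 with hkey
  have hdet : (Matrix.of fun p q : Fin r × Fin s =>
        f q.1 (z p) * g q.2 (z p)).det
      = ∑ φ : (Fin r × Fin s) → Fin s, ∑ σ ∈ univ.filter (fun σ => key σ = φ),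
          permSgn σ * ∏ q, (f q.1 (z (σ q)) * g q.2 (z (σ q))) := by
    rw [Matrix.det_apply']
    rw [Finset.sum_fiberwise_of_maps_to (fun σ _ => Finset.mem_univ (key σ))]
    rfl
  have hφ : ∀ φ : (Fin r × Fin s) → Fin s,
      (‖∑ σ ∈ univ.filter (fun σ => key σ = φ),
          permSgn σ * ∏ q, (f q.1 (z (σ q)) * g q.2 (z (σ q)))‖₊ : ℝ≥0∞)
        ≤ G ^ (r * s) * (vandSup τ f) ^ s := by
    intro φ
    rcases (univ.filter (fun σ : Equiv.Perm (Fin r × Fin s) =>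
        key σ = φ)).eq_empty_or_nonempty with he | ⟨σ₀, hσ₀⟩
    · simp [he]
    · have hkeyσ₀ : key σ₀ = φ := (Finset.mem_filter.1 hσ₀).2
      rw [← hkeyσ₀]
      have hfe := fiber_sum_eq f g z σ₀
      rw [hkey] at *
      rw [hfe, nnnorm_mul, nnnorm_mul, nnnorm_permSgn, one_mul, nnnorm_prod, nnnorm_prod]
      push_cast
      have h1 : (∏ q : Fin r × Fin s, (‖g q.2 (z (σ₀ q))‖₊ : ℝ≥0∞)) ≤ G ^ (r * s) := by
        calc ∏ q : Fin r × Fin s, (‖g q.2 (z (σ₀ q))‖₊ : ℝ≥0∞)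
            ≤ ∏ _q : Fin r × Fin s, G :=
              Finset.prod_le_prod' fun q _ => hG q.2 _ (hz _)
          _ = G ^ (r * s) := by
              rw [Finset.prod_const, card_univ, Fintype.card_prod, Fintype.card_fin,
                Fintype.card_fin]
      have h2 : (∏ j : Fin s,
          (‖(Matrix.of fun i i' : Fin r => f i' (z (σ₀ (i, j)))).det‖₊ : ℝ≥0∞))
            ≤ (vandSup τ f) ^ s := by
        calc ∏ j : Fin s,
            (‖(Matrix.of fun i i' : Fin r => f i' (z (σ₀ (i, j)))).det‖₊ : ℝ≥0∞)
            ≤ ∏ _j : Fin s, vandSup τ f :=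
              Finset.prod_le_prod' fun j _ =>
                le_iSup₂_of_le (fun i => z (σ₀ (i, j))) (fun i => hz _) le_rfl
          _ = (vandSup τ f) ^ s := by
              rw [Finset.prod_const, card_univ, Fintype.card_fin]
      exact mul_le_mul' h1 h2
  rw [hdet]
  calc (‖∑ φ : (Fin r × Fin s) → Fin s, ∑ σ ∈ univ.filter (fun σ => key σ = φ),
          permSgn σ * ∏ q, (f q.1 (z (σ q)) * g q.2 (z (σ q)))‖₊ : ℝ≥0∞)
      ≤ ∑ φ : (Fin r × Fin s) → Fin s,
          (‖∑ σ ∈ univ.filter (fun σ => key σ = φ),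
            permSgn σ * ∏ q, (f q.1 (z (σ q)) * g q.2 (z (σ q)))‖₊ : ℝ≥0∞) := by
        rw [← ENNReal.coe_finset_sum]
        exact ENNReal.coe_le_coe.2 (nnnorm_sum_le _ _)
    _ ≤ ∑ _φ : (Fin r × Fin s) → Fin s, G ^ (r * s) * (vandSup τ f) ^ s :=
        Finset.sum_le_sum fun φ _ => hφ φ
    _ = (s : ℝ≥0∞) ^ (r * s) * (G ^ (r * s) * (vandSup τ f) ^ s) := by
        rw [Finset.sum_const, card_univ, nsmul_eq_mul, Fintype.card_fun,
          Fintype.card_prod, Fintype.card_fin, Fintype.card_fin, Nat.cast_pow]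

lemma ennreal_tendsto_rpow_exponent {b : ℝ≥0∞} (hb0 : b ≠ 0) (hbt : b ≠ ⊤)
    {u : ℕ → ℝ} {β : ℝ} (hu : Tendsto u atTop (nhds β)) :
    Tendsto (fun n => b ^ u n) atTop (nhds (b ^ β)) := by
  have hc : 0 < b.toReal := ENNReal.toReal_pos hb0 hbt
  have hbe : ∀ e : ℝ, b ^ e = ENNReal.ofReal (b.toReal ^ e) := by
    intro e
    rw [← ENNReal.ofReal_rpow_of_pos hc, ENNReal.ofReal_toReal hbt]
  simp_rw [hbe]
  refine ENNReal.tendsto_ofReal ?_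
  have he : ∀ e : ℝ, b.toReal ^ e = Real.exp (Real.log b.toReal * e) :=
    fun e => Real.rpow_def_of_pos hc e
  simp_rw [he]
  exact (Real.continuous_exp.tendsto _).comp (hu.const_mul _)

/-- Tensoring a sequence of lists of polynomial functions on a
bounded set `τ ⊆ ℂ^d` with a fixed finite (stationary) list of polynomial functions:
`limsup t_{H_n}(τ)^{1/e^H_n} ≤ A^α`. -/
theorem limsup_vandSup_tensor_stationary_le
    (d : ℕ) (hd : 1 ≤ d) (τ : Set (Fin d → ℂ)) (hτ : Bornology.IsBounded τ)
    (r : ℕ → ℕ) (hr : ∀ n, 1 ≤ r n)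
    (P : ∀ n, Fin (r n) → MvPolynomial (Fin d) ℂ)
    (s : ℕ) (g : Fin s → MvPolynomial (Fin d) ℂ)
    (eF eH : ℕ → ℕ) (heF : ∀ n, 0 < eF n) (heH : ∀ n, 0 < eH n)
    (hgrow : Tendsto
      (fun n => (eH n : ℝ) / (((r n : ℝ) * (s : ℝ)) * Real.log ((r n : ℝ) * (s : ℝ))))
      atTop atTop)
    (α : ℝ) (hα : 0 ≤ α)
    (hαlim : Tendsto (fun n => ((eF n : ℝ) * (s : ℝ)) / (eH n : ℝ)) atTop (nhds α))
    (A : ℝ≥0∞)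
    (hA : A = limsup (fun n =>
      vandSup τ (fun i (x : Fin d → ℂ) => MvPolynomial.eval x (P n i))
        ^ (1 / (eF n : ℝ))) atTop)
    (hA0 : 0 < A) (hAtop : A ≠ ⊤) :
    limsup (fun n =>
        vandSup τ (fun p : Fin (r n) × Fin s => fun x : Fin d → ℂ =>
            MvPolynomial.eval x (P n p.1) * MvPolynomial.eval x (g p.2))
          ^ (1 / (eH n : ℝ))) atTop
      ≤ A ^ α := by
  classical
  -- s is positive
  have hs : 1 ≤ s := by
    by_contra hcon
    push_neg at hcon
    interval_cases s
    obtain ⟨n, hn⟩ := (hgrow.eventually_ge_atTop 1).exists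
    norm_num at hn
  -- bound for the fixed polynomials g on τ
  have hgb : ∀ j : Fin s, ∃ C : ℝ≥0, ∀ w ∈ τ, ‖MvPolynomial.eval w (g j)‖₊ ≤ C := by
    intro j
    have hK : IsCompact (closure τ) := hτ.isCompact_closure
    obtain ⟨Cr, hCr⟩ := hK.exists_bound_of_continuousOn
      ((MvPolynomial.continuous_eval (p := g j)).continuousOn)
    refine ⟨Real.toNNReal Cr, fun w hw => ?_⟩
    have h1 := hCr w (subset_closure hw)
    rw [← norm_toNNReal]
    exact Real.toNNReal_mono h1
  choose C hC using hgb
  set G : ℝ≥0∞ := ((Finset.univ.sup C : ℝ≥0) : ℝ≥0∞) ⊔ 1 with hGdef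
  have hG : ∀ (j : Fin s) (w : Fin d → ℂ), w ∈ τ →
      (‖MvPolynomial.eval w (g j)‖₊ : ℝ≥0∞) ≤ G := by
    intro j w hw
    refine le_sup_of_le_left ?_
    exact_mod_cast le_trans (hC j w hw) (Finset.le_sup (Finset.mem_univ j))
  have hG1 : (1 : ℝ≥0∞) ≤ G := le_sup_right
  have hGtop : G ≠ ⊤ := by
    rw [hGdef]
    exact (sup_lt_iff.2 ⟨ENNReal.coe_lt_top, ENNReal.one_lt_top⟩).ne
  set Cc : ℝ≥0∞ := (s : ℝ≥0∞) * G with hCcdef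
  have hCc1 : (1 : ℝ≥0∞) ≤ Cc := by
    calc (1 : ℝ≥0∞) = 1 * 1 := (one_mul 1).symm
      _ ≤ (s : ℝ≥0∞) * G := mul_le_mul' (by exact_mod_cast hs) hG1
  have hCc0 : Cc ≠ 0 := fun h => by simp [h] at hCc1
  have hCctop : Cc ≠ ⊤ := ENNReal.mul_ne_top (ENNReal.natCast_ne_top s) hGtop
  set T : ℕ → ℝ≥0∞ := fun n =>
    vandSup τ (fun i (x : Fin d → ℂ) => MvPolynomial.eval x (P n i)) with hTdef
  -- the key supremum bound
  have hbound : ∀ n,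
      vandSup τ (fun p : Fin (r n) × Fin s => fun x : Fin d → ℂ =>
          MvPolynomial.eval x (P n p.1) * MvPolynomial.eval x (g p.2))
        ≤ Cc ^ (r n * s) * (T n) ^ s := by
    intro n
    refine iSup₂_le fun z hz => ?_
    calc (‖(Matrix.of fun p q : Fin (r n) × Fin s =>
            MvPolynomial.eval (z p) (P n q.1) * MvPolynomial.eval (z p) (g q.2)).det‖₊ : ℝ≥0∞)
        ≤ (s : ℝ≥0∞) ^ (r n * s) * (G ^ (r n * s) * (T n) ^ s) :=
          det_tensor_bound τ (fun i x => MvPolynomial.eval x (P n i))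
            (fun j x => MvPolynomial.eval x (g j)) G hG z hz
      _ = Cc ^ (r n * s) * (T n) ^ s := by rw [hCcdef, mul_pow, mul_assoc]
  -- real sequences
  have heHpos : ∀ n, (0 : ℝ) < eH n := fun n => by exact_mod_cast heH n
  have heFpos : ∀ n, (0 : ℝ) < eF n := fun n => by exact_mod_cast heF n
  have hx2 : ∀ᶠ n in atTop, (2 : ℝ) ≤ (r n : ℝ) * (s : ℝ) := by
    filter_upwards [hgrow.eventually_ge_atTop 1] with n hn
    by_contra hcon
    push_neg at hcon
    have hxn : (r n : ℝ) * (s : ℝ) = ((r n * s : ℕ) : ℝ) := by push_cast; ring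
    have h1 : 1 ≤ r n * s := Nat.one_le_iff_ne_zero.2 (Nat.mul_pos (hr n) hs).ne'
    have h2 : r n * s < 2 := by
      rw [hxn] at hcon
      exact_mod_cast hcon
    have h3 : r n * s = 1 := le_antisymm (by omega) h1
    have h4 : (r n : ℝ) * (s : ℝ) = 1 := by
      rw [hxn, h3]
      norm_num
    rw [h4] at hn
    norm_num at hn
  have hlog0 : Tendsto
      (fun n => ((r n : ℝ) * (s : ℝ)) * Real.log ((r n : ℝ) * (s : ℝ)) / eH n)
      atTop (nhds 0) := by
    have h := hgrow.inv_tendsto_atTop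
    refine h.congr fun n => ?_
    rw [Pi.inv_apply, inv_div]
  have hv0 : Tendsto (fun n => ((r n : ℝ) * (s : ℝ)) / eH n) atTop (nhds 0) := by
    have hlog2 : (0 : ℝ) < Real.log 2 := Real.log_pos (by norm_num)
    have hub : ∀ᶠ n in atTop,
        ((r n : ℝ) * (s : ℝ)) / eH n ≤
          (((r n : ℝ) * (s : ℝ)) * Real.log ((r n : ℝ) * (s : ℝ)) / eH n) / Real.log 2 := by
      filter_upwards [hx2] with n hn
      set y : ℝ := (r n : ℝ) * (s : ℝ) with hydef
      have hlogx : Real.log 2 ≤ Real.log y := Real.log_le_log (by norm_num) hn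
      have hypos : (0 : ℝ) < y := by linarith
      rw [div_le_div_iff₀ (heHpos n) hlog2, div_mul_eq_mul_div, mul_div_assoc,
        div_self (heHpos n).ne', mul_one]
      nlinarith [mul_le_mul_of_nonneg_left hlogx hypos.le]
    have hlb : ∀ᶠ n in atTop, (0 : ℝ) ≤ ((r n : ℝ) * (s : ℝ)) / eH n := by
      filter_upwards with n
      have := heHpos n
      positivity
    have hdiv : Tendsto
        (fun n => (((r n : ℝ) * (s : ℝ)) * Real.log ((r n : ℝ) * (s : ℝ)) / eH n) / Real.log 2)
        atTop (nhds 0) := by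
      simpa using hlog0.div_const (Real.log 2)
    exact tendsto_of_tendsto_of_tendsto_of_le_of_le' tendsto_const_nhds hdiv hlb hub
    -- per-B bound on the limsup
  have hevbound : ∀ B : ℝ≥0∞, A < B → B ≠ ⊤ →
      limsup (fun n =>
        vandSup τ (fun p : Fin (r n) × Fin s => fun x : Fin d → ℂ =>
            MvPolynomial.eval x (P n p.1) * MvPolynomial.eval x (g p.2))
          ^ (1 / (eH n : ℝ))) atTop ≤ B ^ α := by
    intro B hAB hBtop
    have hB0 : B ≠ 0 := (hA0.trans hAB).ne'
    have hlt : ∀ᶠ n in atTop, T n ^ (1 / (eF n : ℝ)) < B := by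
      refine eventually_lt_of_limsup_lt ?_
      rw [hA] at hAB
      exact hAB
    have hev : ∀ᶠ n in atTop,
        vandSup τ (fun p : Fin (r n) × Fin s => fun x : Fin d → ℂ =>
            MvPolynomial.eval x (P n p.1) * MvPolynomial.eval x (g p.2))
          ^ (1 / (eH n : ℝ))
        ≤ Cc ^ (((r n : ℝ) * (s : ℝ)) / eH n) * B ^ ((eF n : ℝ) * (s : ℝ) / eH n) := by
      filter_upwards [hlt] with n hn
      have h0 : (0 : ℝ) ≤ 1 / (eH n : ℝ) := by positivity
      calc vandSup τ (fun p : Fin (r n) × Fin s => fun x : Fin d → ℂ =>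
            MvPolynomial.eval x (P n p.1) * MvPolynomial.eval x (g p.2))
          ^ (1 / (eH n : ℝ))
          ≤ (Cc ^ (r n * s) * (T n) ^ s) ^ (1 / (eH n : ℝ)) :=
            ENNReal.rpow_le_rpow (hbound n) h0
        _ = (Cc ^ (r n * s) : ℝ≥0∞) ^ (1 / (eH n : ℝ)) *
              ((T n) ^ s : ℝ≥0∞) ^ (1 / (eH n : ℝ)) :=
            ENNReal.mul_rpow_of_nonneg _ _ h0
        _ = Cc ^ (((r n : ℝ) * (s : ℝ)) / eH n) * (T n) ^ ((s : ℝ) / eH n) := by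
            rw [← ENNReal.rpow_natCast Cc (r n * s), ← ENNReal.rpow_natCast (T n) s,
              ← ENNReal.rpow_mul, ← ENNReal.rpow_mul]
            congr 2
            · push_cast
              ring
            · field_simp
        _ = Cc ^ (((r n : ℝ) * (s : ℝ)) / eH n) *
              ((T n) ^ (1 / (eF n : ℝ))) ^ ((eF n : ℝ) * (s : ℝ) / eH n) := by
            rw [← ENNReal.rpow_mul]
            congr 2
            field_simp
            rw [one_div, mul_comm, div_mul_cancel_left₀ (heFpos n).ne']
        _ ≤ Cc ^ (((r n : ℝ) * (s : ℝ)) / eH n) * B ^ ((eF n : ℝ) * (s : ℝ) / eH n) :=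
            mul_le_mul' le_rfl (ENNReal.rpow_le_rpow hn.le (by positivity))
    have h1 : Tendsto (fun n => Cc ^ (((r n : ℝ) * (s : ℝ)) / eH n)) atTop (nhds 1) := by
      have := ennreal_tendsto_rpow_exponent hCc0 hCctop hv0
      simpa [ENNReal.rpow_zero] using this
    have h2 : Tendsto (fun n => B ^ ((eF n : ℝ) * (s : ℝ) / eH n)) atTop (nhds (B ^ α)) :=
      ennreal_tendsto_rpow_exponent hB0 hBtop hαlim
    have hBαtop : B ^ α ≠ ⊤ := ENNReal.rpow_ne_top_of_nonneg hα hBtop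
    have hu : Tendsto (fun n => Cc ^ (((r n : ℝ) * (s : ℝ)) / eH n) *
        B ^ ((eF n : ℝ) * (s : ℝ) / eH n)) atTop (nhds (B ^ α)) := by
      have := ENNReal.Tendsto.mul h1 (Or.inl one_ne_zero) h2 (Or.inr ENNReal.one_ne_top)
      simpa using this
    calc limsup (fun n =>
        vandSup τ (fun p : Fin (r n) × Fin s => fun x : Fin d → ℂ =>
            MvPolynomial.eval x (P n p.1) * MvPolynomial.eval x (g p.2))
          ^ (1 / (eH n : ℝ))) atTop
        ≤ limsup (fun n => Cc ^ (((r n : ℝ) * (s : ℝ)) / eH n) *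
            B ^ ((eF n : ℝ) * (s : ℝ) / eH n)) atTop := limsup_le_limsup hev
      _ = B ^ α := hu.limsup_eq
  -- take B ↓ A
  set B : ℕ → ℝ≥0∞ := fun k => A + A * ((k : ℝ≥0∞) + 1)⁻¹ with hBdef
  have hkne : ∀ k : ℕ, ((k : ℝ≥0∞) + 1) ≠ 0 := fun k => by
    simp
  have hknetop : ∀ k : ℕ, ((k : ℝ≥0∞) + 1) ≠ ⊤ := fun k => by
    simp [ENNReal.add_ne_top]
  have hBgt : ∀ k, A < B k := fun k =>
    ENNReal.lt_add_right hAtop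
      (mul_ne_zero hA0.ne' (ENNReal.inv_ne_zero.2 (hknetop k)))
  have hBtop : ∀ k, B k ≠ ⊤ := fun k =>
    ENNReal.add_ne_top.2 ⟨hAtop, ENNReal.mul_ne_top hAtop (ENNReal.inv_ne_top.2 (hkne k))⟩
  have hinv : Tendsto (fun k : ℕ => ((k : ℝ≥0∞) + 1)⁻¹) atTop (nhds 0) := by
    have h := ENNReal.tendsto_inv_nat_nhds_zero.comp (tendsto_add_atTop_nat 1)
    refine h.congr fun k => ?_
    simp [Function.comp]
  have hBten : Tendsto B atTop (nhds A) := by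
    have h := ENNReal.Tendsto.const_mul hinv (Or.inr hAtop)
    have h2 := (tendsto_const_nhds : Tendsto (fun _ : ℕ => A) atTop (nhds A)).add h
    simpa using h2
  have hfinal : Tendsto (fun k => (B k) ^ α) atTop (nhds (A ^ α)) :=
    ((ENNReal.continuous_rpow_const (y := α)).tendsto A).comp hBten
  exact ge_of_tendsto' hfinal fun k => hevbound (B k) (hBgt k) (hBtop k)
end

section
/- Let p, q ≥ 1, and for each n ≥ 1 let F_n be a list of r_n ≥ 1 functions ℂ^p → ℂ and G_n a list of s_n ≥ 1 functions ℂ^q → ℂ. Let H_n be the list of the r_n s_n external products (x, y) ↦ f(x) g(y) on ℂ^p × ℂ^q, for f in F_n and g in G_n. Let τ₁ ⊆ ℂ^p and τ₂ ⊆ ℂ^q, and let e^F_n, e^G_n, e^H_n be positive integers with e^H_n / (r_n s_n · log(r_n s_n)) → ∞, e^F_n s_n / e^H_n → α₁, and e^G_n r_n / e^H_n → α₂, where α₁, α₂ ≥ 0. Assume t_{F_n}(τ₁) and t_{G_n}(τ₂) are finite for each n, and that the sequences t_{F_n}(τ₁)^{1/e^F_n} and t_{G_n}(τ₂)^{1/e^G_n}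 converge to finite strictly positive limits A and B respectively. Then the sequence t_{H_n}(τ₁ × τ₂)^{1/e^H_n} converges, and its limit equals A^{α₁} · B^{α₂}. -/
open Filter
open scoped ENNReal

open Matrix
open scoped NNReal Kronecker Nat

namespace VandAux

lemma iSup_pow_succ {ι : Sort*} (f : ι → ℝ≥0∞) (n : ℕ) :
    (⨆ i, f i) ^ (n + 1) = ⨆ i, f i ^ (n + 1) := by
  induction n with
  | zero => simp
  | succ k ih =>
    refine le_antisymm ?_ (iSup_le fun i => by gcongr; exact le_iSup f i)
    calc (⨆ i, f i) ^ (k + 2) = (⨆ i, f i) ^ (k + 1) * (⨆ i, f i) := by ring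
      _ = ⨆ i, f i ^ (k + 1) * (⨆ j, f j) := by rw [ih, ENNReal.iSup_mul]
      _ ≤ ⨆ i, f i ^ (k + 2) := by
          refine iSup_le fun i => ?_
          rw [ENNReal.mul_iSup]
          refine iSup_le fun j => ?_
          rcases le_total (f i) (f j) with h | h
          · calc f i ^ (k+1) * f j ≤ f j ^ (k+1) * f j := by gcongr
              _ = f j ^ (k+2) := by ring
              _ ≤ _ := le_iSup (fun i => f i ^ (k+2)) j
          · calc f i ^ (k+1) * f j ≤ f i ^ (k+1) * f i := by gcongr
              _ = f i ^ (k+2) := by ring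
              _ ≤ _ := le_iSup (fun i => f i ^ (k+2)) i

lemma iSup_pow_nonempty {ι : Sort*} [Nonempty ι] (f : ι → ℝ≥0∞) (n : ℕ) :
    (⨆ i, f i) ^ n = ⨆ i, f i ^ n := by
  cases n with
  | zero => simp
  | succ k => exact iSup_pow_succ f k

lemma iSup_prop_pow {ι : Sort*} (P : ι → Prop) (f : ι → ℝ≥0∞) (n : ℕ) (h : ∃ i, P i) :
    (⨆ i, ⨆ (_ : P i), f i) ^ n = ⨆ i, ⨆ (_ : P i), f i ^ n := by
  have : Nonempty (Subtype P) := ⟨⟨h.choose, h.choose_spec⟩⟩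
  rw [iSup_subtype' (f := fun i (_ : P i) => f i),
    iSup_subtype' (f := fun i (_ : P i) => f i ^ n), iSup_pow_nonempty]

lemma le_vandSup {S ι : Type*} [Fintype ι] [DecidableEq ι]
    (τ : Set S) (m : ι → S → ℂ) (z : ι → S) (hz : ∀ i, z i ∈ τ) :
    (‖(Matrix.of fun i j : ι => m j (z i)).det‖₊ : ℝ≥0∞) ≤ vandSup τ m :=
  le_iSup₂ (f := fun (z : ι → S) (_ : ∀ i, z i ∈ τ) =>
    (‖(Matrix.of fun i j : ι => m j (z i)).det‖₊ : ℝ≥0∞)) z hz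

lemma nnnorm_le_vandSup {S ι : Type*} [Fintype ι] [DecidableEq ι]
    (τ : Set S) (m : ι → S → ℂ) (z : ι → S) (hz : ∀ i, z i ∈ τ)
    (hfin : vandSup τ m ≠ ⊤) :
    ‖(Matrix.of fun i j : ι => m j (z i)).det‖₊ ≤ (vandSup τ m).toNNReal := by
  have := le_vandSup τ m z hz
  rwa [← ENNReal.coe_toNNReal hfin, ENNReal.coe_le_coe] at this

lemma vandSup_le {S ι : Type*} [Fintype ι] [DecidableEq ι]
    (τ : Set S) (m : ι → S → ℂ) (C : ℝ≥0∞)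
    (h : ∀ z : ι → S, (∀ i, z i ∈ τ) →
      (‖(Matrix.of fun i j : ι => m j (z i)).det‖₊ : ℝ≥0∞) ≤ C) :
    vandSup τ m ≤ C := iSup₂_le h

/-- lower bound : grid points -/
lemma lower {p q r s : ℕ} (hr : 1 ≤ r) (hs : 1 ≤ s)
    (F : Fin r → (Fin p → ℂ) → ℂ) (G : Fin s → (Fin q → ℂ) → ℂ)
    (τ₁ : Set (Fin p → ℂ)) (τ₂ : Set (Fin q → ℂ)) :
    vandSup τ₁ F ^ s * vandSup τ₂ G ^ r ≤
      vandSup (τ₁ ×ˢ τ₂) (fun pr : Fin r × Fin s =>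
        fun z : (Fin p → ℂ) × (Fin q → ℂ) => F pr.1 z.1 * G pr.2 z.2) := by
  have hFs : vandSup τ₁ F ^ s = ⨆ (z : Fin r → (Fin p → ℂ)) (_ : ∀ i, z i ∈ τ₁),
      (‖(Matrix.of fun i j => F j (z i)).det‖₊ : ℝ≥0∞) ^ s := by
    obtain ⟨s', rfl⟩ : ∃ s', s = s' + 1 := ⟨s - 1, by omega⟩
    rw [vandSup, iSup_pow_succ]
    refine iSup_congr fun z => ?_
    by_cases h : ∀ i, z i ∈ τ₁ <;> simp [h]
  have hGr : vandSup τ₂ G ^ r = ⨆ (z : Fin s → (Fin q → ℂ)) (_ : ∀ i, z i ∈ τ₂),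
      (‖(Matrix.of fun i j => G j (z i)).det‖₊ : ℝ≥0∞) ^ r := by
    obtain ⟨r', rfl⟩ : ∃ r', r = r' + 1 := ⟨r - 1, by omega⟩
    rw [vandSup, iSup_pow_succ]
    refine iSup_congr fun z => ?_
    by_cases h : ∀ i, z i ∈ τ₂ <;> simp [h]
  rw [hFs, hGr, ENNReal.iSup_mul]
  refine iSup_le fun w => ?_
  rw [ENNReal.iSup_mul]
  refine iSup_le fun hw => ?_
  rw [ENNReal.mul_iSup]
  refine iSup_le fun v => ?_
  rw [ENNReal.mul_iSup]
  refine iSup_le fun hv => ?_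
  refine le_trans (le_of_eq ?_) (le_vandSup (τ₁ ×ˢ τ₂) _
    (fun i : Fin r × Fin s => (w i.1, v i.2)) (fun i => Set.mem_prod.2 ⟨hw i.1, hv i.2⟩))
  have hmat : (Matrix.of fun (i j : Fin r × Fin s) =>
      F j.1 ((w i.1, v i.2) : (Fin p → ℂ) × (Fin q → ℂ)).1 *
        G j.2 ((w i.1, v i.2) : (Fin p → ℂ) × (Fin q → ℂ)).2) =
      (Matrix.of fun a j => F j (w a)) ⊗ₖ (Matrix.of fun b k => G k (v b)) := by
    ext ⟨a, b⟩ ⟨j, k⟩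
    simp [Matrix.kroneckerMap_apply]
  rw [hmat, Matrix.det_kronecker]
  push_cast
  simp [nnnorm_mul, nnnorm_pow]

section Core
variable {p q r s : ℕ}
  (F : Fin r → (Fin p → ℂ) → ℂ) (G : Fin s → (Fin q → ℂ) → ℂ)
  (τ₁ : Set (Fin p → ℂ)) (τ₂ : Set (Fin q → ℂ))

/-- Cramer bound: if `V = (F j (w a))` has nonzero det, the coordinates of any
`F`-vector in the `V`-basis are bounded by `TF / ‖det V‖`. -/
lemma cramer_coord_bound (TF : ℝ≥0)
    (hTF : ∀ (z : Fin r → (Fin p → ℂ)), (∀ a, z a ∈ τ₁) →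
      ‖(Matrix.of fun a j => F j (z a)).det‖₊ ≤ TF)
    (w : Fin r → (Fin p → ℂ)) (hw : ∀ a, w a ∈ τ₁)
    (hdF : (Matrix.of fun a j => F j (w a)).det ≠ 0)
    (x : Fin p → ℂ) (hx : x ∈ τ₁) (a : Fin r) :
    ‖((Matrix.of fun a j => F j (w a))ᵀ⁻¹ *ᵥ (fun j => F j x)) a‖₊ ≤
      TF / ‖(Matrix.of fun a j => F j (w a)).det‖₊ := by
  set V : Matrix (Fin r) (Fin r) ℂ := Matrix.of fun a j => F j (w a) with hV
  have hdF' : ‖V.det‖₊ ≠ 0 := by simpa using hdF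
  have hVT : IsUnit (Vᵀ).det := by
    rw [Matrix.det_transpose]; exact isUnit_iff_ne_zero.2 hdF
  -- `det V • (Vᵀ⁻¹ *ᵥ u) = cramer Vᵀ u`
  have hcr : V.det • (Vᵀ⁻¹ *ᵥ (fun j => F j x)) = cramer Vᵀ (fun j => F j x) := by
    rw [Matrix.cramer_eq_adjugate_mulVec]
    have h0 : Vᵀ *ᵥ (Vᵀ⁻¹ *ᵥ (fun j => F j x)) = (fun j => F j x) := by
      rw [Matrix.mulVec_mulVec, Matrix.mul_nonsing_inv _ hVT, Matrix.one_mulVec]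
    conv_rhs => rw [← h0]
    rw [Matrix.mulVec_mulVec, Matrix.adjugate_mul, Matrix.det_transpose,
      Matrix.smul_mulVec, Matrix.one_mulVec]
  have hcomp : V.det * ((Vᵀ⁻¹ *ᵥ (fun j => F j x)) a) =
      (V.updateRow a (fun j => F j x)).det := by
    have := congrFun hcr a
    simpa [Matrix.cramer_transpose_apply] using this
  have hupd : (V.updateRow a (fun j => F j x)).det =
      (Matrix.of fun a' j => F j (Function.update w a x a')).det := by
    congr 1
    ext a' j
    by_cases h : a' = a
    · subst h; simp [Matrix.updateRow_apply]
    · simp [Matrix.updateRow_apply, h, Function.update, hV]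
  have hbound : ‖(V.updateRow a (fun j => F j x)).det‖₊ ≤ TF := by
    rw [hupd]
    refine hTF _ fun a' => ?_
    by_cases h : a' = a
    · subst h; simpa using hx
    · simpa [Function.update, h] using hw a'
  have : ‖V.det‖₊ * ‖(Vᵀ⁻¹ *ᵥ (fun j => F j x)) a‖₊ ≤ TF := by
    rw [← nnnorm_mul, hcomp]; exact hbound
  exact (le_div_iff₀ (pos_iff_ne_zero.mpr hdF')).2 (by rwa [mul_comm])

end Core

section Core2
variable {p q r s : ℕ}

/-- Core inequality: for any point configuration and any auxiliary bases. -/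
lemma det_point_bound (hr : 1 ≤ r) (hs : 1 ≤ s)
    (F : Fin r → (Fin p → ℂ) → ℂ) (G : Fin s → (Fin q → ℂ) → ℂ)
    (τ₁ : Set (Fin p → ℂ)) (τ₂ : Set (Fin q → ℂ)) (TF TG : ℝ≥0)
    (hTF : ∀ (z : Fin r → (Fin p → ℂ)), (∀ a, z a ∈ τ₁) →
      ‖(Matrix.of fun a j => F j (z a)).det‖₊ ≤ TF)
    (hTG : ∀ (z : Fin s → (Fin q → ℂ)), (∀ b, z b ∈ τ₂) →
      ‖(Matrix.of fun b k => G k (z b)).det‖₊ ≤ TG)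
    (z : Fin r × Fin s → (Fin p → ℂ) × (Fin q → ℂ)) (hz : ∀ i, z i ∈ τ₁ ×ˢ τ₂)
    (w : Fin r → (Fin p → ℂ)) (hw : ∀ a, w a ∈ τ₁)
    (v : Fin s → (Fin q → ℂ)) (hv : ∀ b, v b ∈ τ₂)
    (hdF : (Matrix.of fun a j => F j (w a)).det ≠ 0)
    (hdG : (Matrix.of fun b k => G k (v b)).det ≠ 0) :
    ‖(Matrix.of fun i (j : Fin r × Fin s) => F j.1 (z i).1 * G j.2 (z i).2).det‖₊
        * ‖(Matrix.of fun a j => F j (w a)).det‖₊ ^ (r * s - s)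
        * ‖(Matrix.of fun b k => G k (v b)).det‖₊ ^ (r * s - r)
      ≤ ((r * s)! : ℝ≥0) * TF ^ (r * s) * TG ^ (r * s) := by
  classical
  set V : Matrix (Fin r) (Fin r) ℂ := Matrix.of fun a j => F j (w a) with hVdef
  set W : Matrix (Fin s) (Fin s) ℂ := Matrix.of fun b k => G k (v b) with hWdef
  set dF : ℝ≥0 := ‖V.det‖₊ with hdFdef
  set dG : ℝ≥0 := ‖W.det‖₊ with hdGdef
  have hdF' : dF ≠ 0 := by simpa [hdFdef] using hdF
  have hdG' : dG ≠ 0 := by simpa [hdGdef] using hdG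
  set c : (Fin p → ℂ) → Fin r → ℂ := fun x => Vᵀ⁻¹ *ᵥ (fun j => F j x) with hcdef
  set d : (Fin q → ℂ) → Fin s → ℂ := fun y => Wᵀ⁻¹ *ᵥ (fun k => G k y) with hddef
  have hVu : IsUnit Vᵀ.det := by
    rw [Matrix.det_transpose]; exact isUnit_iff_ne_zero.2 hdF
  have hWu : IsUnit Wᵀ.det := by
    rw [Matrix.det_transpose]; exact isUnit_iff_ne_zero.2 hdG
  -- representation
  have hreprF : ∀ (x : Fin p → ℂ) (j : Fin r), F j x = ∑ a, V a j * c x a := by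
    intro x j
    have h0 : Vᵀ *ᵥ (c x) = (fun j => F j x) := by
      rw [hcdef, Matrix.mulVec_mulVec, Matrix.mul_nonsing_inv _ hVu, Matrix.one_mulVec]
    have := congrFun h0 j
    rw [← this, Matrix.mulVec]
    simp [dotProduct, Matrix.transpose_apply]
  have hreprG : ∀ (y : Fin q → ℂ) (k : Fin s), G k y = ∑ b, W b k * d y b := by
    intro y k
    have h0 : Wᵀ *ᵥ (d y) = (fun k => G k y) := by
      rw [hddef, Matrix.mulVec_mulVec, Matrix.mul_nonsing_inv _ hWu, Matrix.one_mulVec]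
    have := congrFun h0 k
    rw [← this, Matrix.mulVec]
    simp [dotProduct, Matrix.transpose_apply]
  -- coordinate bounds
  have hc : ∀ x ∈ τ₁, ∀ a, ‖c x a‖₊ ≤ TF / dF := fun x hx a =>
    cramer_coord_bound F τ₁ TF hTF w hw hdF x hx a
  have hd : ∀ y ∈ τ₂, ∀ b, ‖d y b‖₊ ≤ TG / dG := fun y hy b =>
    cramer_coord_bound G τ₂ TG hTG v hv hdG y hy b
  -- factorization
  set M : Matrix (Fin r × Fin s) (Fin r × Fin s) ℂ :=
    Matrix.of fun i (j : Fin r × Fin s) => F j.1 (z i).1 * G j.2 (z i).2 with hMdef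
  set M' : Matrix (Fin r × Fin s) (Fin r × Fin s) ℂ :=
    Matrix.of fun i (ab : Fin r × Fin s) => c ((z i).1) ab.1 * d ((z i).2) ab.2 with hM'def
  have hfact : M = M' * (V ⊗ₖ W) := by
    ext i ⟨j, k⟩
    show F j (z i).1 * G k (z i).2 = _
    rw [Matrix.mul_apply, hreprF ((z i).1) j, hreprG ((z i).2) k, Finset.sum_mul_sum,
      Fintype.sum_prod_type]
    refine Finset.sum_congr rfl fun a _ => Finset.sum_congr rfl fun b _ => ?_
    simp only [hM'def, Matrix.of_apply, Matrix.kroneckerMap_apply]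
    ring
  have hdet : ‖M.det‖₊ = ‖M'.det‖₊ * dF ^ s * dG ^ r := by
    rw [hfact, Matrix.det_mul, Matrix.det_kronecker]
    simp [nnnorm_mul, nnnorm_pow, hdFdef, hdGdef, mul_assoc]
  -- bound on `M'`
  have hM'bound : ‖M'.det‖₊ ≤ ((r * s)! : ℝ≥0) * ((TF / dF) * (TG / dG)) ^ (r * s) := by
    rw [Matrix.det_apply]
    refine le_trans (nnnorm_sum_le _ _) ?_
    have hterm : ∀ σ : Equiv.Perm (Fin r × Fin s),
        ‖Equiv.Perm.sign σ • ∏ i, M' (σ i) i‖₊ ≤ ((TF / dF) * (TG / dG)) ^ (r * s) := by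
      intro σ
      have hsgn : ‖Equiv.Perm.sign σ • ∏ i, M' (σ i) i‖₊ = ‖∏ i, M' (σ i) i‖₊ := by
        rcases Int.units_eq_one_or (Equiv.Perm.sign σ) with h | h <;>
          simp [h, Units.smul_def]
      rw [hsgn, nnnorm_prod]
      calc ∏ i, ‖M' (σ i) i‖₊ ≤ ∏ _i : Fin r × Fin s, ((TF / dF) * (TG / dG)) := by
            refine Finset.prod_le_prod' ?_
            intro i _
            have hzm := hz (σ i)
            rw [hM'def]
            simp only [Matrix.of_apply, nnnorm_mul]
            exact mul_le_mul' (hc _ hzm.1 i.1) (hd _ hzm.2 i.2)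
        _ = ((TF / dF) * (TG / dG)) ^ (r * s) := by
            simp [Finset.prod_const, Fintype.card_prod]
    calc ∑ σ : Equiv.Perm (Fin r × Fin s), ‖Equiv.Perm.sign σ • ∏ i, M' (σ i) i‖₊
        ≤ ∑ _σ : Equiv.Perm (Fin r × Fin s), ((TF / dF) * (TG / dG)) ^ (r * s) :=
          Finset.sum_le_sum fun σ _ => hterm σ
      _ = ((r * s)! : ℝ≥0) * ((TF / dF) * (TG / dG)) ^ (r * s) := by
          simp [Finset.sum_const, Fintype.card_perm, Fintype.card_prod, nsmul_eq_mul]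
  -- combine
  have hsle : s ≤ r * s := Nat.le_mul_of_pos_left s hr
  have hrle : r ≤ r * s := Nat.le_mul_of_pos_right r hs
  calc ‖M.det‖₊ * dF ^ (r * s - s) * dG ^ (r * s - r)
      = ‖M'.det‖₊ * (dF ^ s * dF ^ (r * s - s)) * (dG ^ r * dG ^ (r * s - r)) := by
        rw [hdet]; ring
    _ = ‖M'.det‖₊ * dF ^ (r * s) * dG ^ (r * s) := by
        rw [← pow_add, ← pow_add, Nat.add_sub_cancel' hsle, Nat.add_sub_cancel' hrle]
    _ ≤ (((r * s)! : ℝ≥0) * ((TF / dF) * (TG / dG)) ^ (r * s)) * dF ^ (r * s)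
          * dG ^ (r * s) := by gcongr
    _ = ((r * s)! : ℝ≥0) * ((TF / dF) * dF) ^ (r * s) * ((TG / dG) * dG) ^ (r * s) := by
        rw [mul_pow, mul_pow, mul_pow]; ring
    _ = ((r * s)! : ℝ≥0) * TF ^ (r * s) * TG ^ (r * s) := by
        rw [div_mul_cancel₀ _ hdF', div_mul_cancel₀ _ hdG']

end Core2

section Upper
variable {p q r s : ℕ}

lemma upper (hr : 1 ≤ r) (hs : 1 ≤ s)
    (F : Fin r → (Fin p → ℂ) → ℂ) (G : Fin s → (Fin q → ℂ) → ℂ)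
    (τ₁ : Set (Fin p → ℂ)) (τ₂ : Set (Fin q → ℂ))
    (hFt : vandSup τ₁ F ≠ ⊤) (hGt : vandSup τ₂ G ≠ ⊤)
    (hF0 : vandSup τ₁ F ≠ 0) (hG0 : vandSup τ₂ G ≠ 0) :
    vandSup (τ₁ ×ˢ τ₂) (fun pr : Fin r × Fin s =>
        fun z : (Fin p → ℂ) × (Fin q → ℂ) => F pr.1 z.1 * G pr.2 z.2)
      ≤ ((r * s)! : ℝ≥0∞) * vandSup τ₁ F ^ s * vandSup τ₂ G ^ r := by
  classical
  set TF : ℝ≥0 := (vandSup τ₁ F).toNNReal with hTFdef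
  set TG : ℝ≥0 := (vandSup τ₂ G).toNNReal with hTGdef
  have hTFc : vandSup τ₁ F = (TF : ℝ≥0∞) := (ENNReal.coe_toNNReal hFt).symm
  have hTGc : vandSup τ₂ G = (TG : ℝ≥0∞) := (ENNReal.coe_toNNReal hGt).symm
  have hTF0 : TF ≠ 0 := fun h => hF0 (by rw [hTFc, h, ENNReal.coe_zero])
  have hTG0 : TG ≠ 0 := fun h => hG0 (by rw [hTGc, h, ENNReal.coe_zero])
  have hTFb : ∀ (z : Fin r → (Fin p → ℂ)), (∀ a, z a ∈ τ₁) →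
      ‖(Matrix.of fun a j => F j (z a)).det‖₊ ≤ TF :=
    fun z hz => nnnorm_le_vandSup τ₁ F z hz hFt
  have hTGb : ∀ (z : Fin s → (Fin q → ℂ)), (∀ b, z b ∈ τ₂) →
      ‖(Matrix.of fun b k => G k (z b)).det‖₊ ≤ TG :=
    fun z hz => nnnorm_le_vandSup τ₂ G z hz hGt
  -- existence of nondegenerate bases
  have hexF : ∃ w : Fin r → (Fin p → ℂ), (∀ a, w a ∈ τ₁) ∧
      (Matrix.of fun a j => F j (w a)).det ≠ 0 := by
    by_contra h
    push_neg at h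
    refine hF0 (le_antisymm (vandSup_le _ _ _ fun z hz => ?_) zero_le)
    rcases eq_or_ne ((Matrix.of fun a j => F j (z a)).det) 0 with h0 | h0
    · simp [h0]
    · exact absurd (h z hz) (by simpa using h0)
  have hexG : ∃ v : Fin s → (Fin q → ℂ), (∀ b, v b ∈ τ₂) ∧
      (Matrix.of fun b k => G k (v b)).det ≠ 0 := by
    by_contra h
    push_neg at h
    refine hG0 (le_antisymm (vandSup_le _ _ _ fun z hz => ?_) zero_le)
    rcases eq_or_ne ((Matrix.of fun b k => G k (z b)).det) 0 with h0 | h0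
    · simp [h0]
    · exact absurd (h z hz) (by simpa using h0)
  -- subtype suprema
  have hsupF : (⨆ (w : Fin r → (Fin p → ℂ)) (_ : (∀ a, w a ∈ τ₁) ∧
      (Matrix.of fun a j => F j (w a)).det ≠ 0),
      (‖(Matrix.of fun a j => F j (w a)).det‖₊ : ℝ≥0∞)) = vandSup τ₁ F := by
    refine le_antisymm (iSup₂_le fun w hw => le_vandSup τ₁ F w hw.1) (iSup₂_le fun w hw => ?_)
    rcases eq_or_ne ((Matrix.of fun a j => F j (w a)).det) 0 with h0 | h0
    · simp [h0]
    · exact le_iSup₂ (f := fun w' (_ : (∀ a, w' a ∈ τ₁) ∧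
        (Matrix.of fun a j => F j (w' a)).det ≠ 0) =>
        (‖(Matrix.of fun a j => F j (w' a)).det‖₊ : ℝ≥0∞)) w ⟨hw, h0⟩
  have hsupG : (⨆ (v : Fin s → (Fin q → ℂ)) (_ : (∀ b, v b ∈ τ₂) ∧
      (Matrix.of fun b k => G k (v b)).det ≠ 0),
      (‖(Matrix.of fun b k => G k (v b)).det‖₊ : ℝ≥0∞)) = vandSup τ₂ G := by
    refine le_antisymm (iSup₂_le fun v hv => le_vandSup τ₂ G v hv.1) (iSup₂_le fun v hv => ?_)
    rcases eq_or_ne ((Matrix.of fun b k => G k (v b)).det) 0 with h0 | h0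
    · simp [h0]
    · exact le_iSup₂ (f := fun v' (_ : (∀ b, v' b ∈ τ₂) ∧
        (Matrix.of fun b k => G k (v' b)).det ≠ 0) =>
        (‖(Matrix.of fun b k => G k (v' b)).det‖₊ : ℝ≥0∞)) v ⟨hv, h0⟩
  -- the main bound for a fixed configuration
  refine vandSup_le _ _ _ fun z hz => ?_
  have hmain : (‖(Matrix.of fun i (j : Fin r × Fin s) =>
        F j.1 (z i).1 * G j.2 (z i).2).det‖₊ : ℝ≥0∞)
        * vandSup τ₁ F ^ (r * s - s) * vandSup τ₂ G ^ (r * s - r)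
      ≤ ((r * s)! : ℝ≥0∞) * (TF : ℝ≥0∞) ^ (r * s) * (TG : ℝ≥0∞) ^ (r * s) := by
    rw [← hsupF, ← hsupG,
      iSup_prop_pow _ _ (r * s - s) hexF, iSup_prop_pow _ _ (r * s - r) hexG,
      mul_assoc, ENNReal.iSup_mul, ENNReal.mul_iSup]
    refine iSup_le fun w => ?_
    rw [ENNReal.iSup_mul, ENNReal.mul_iSup]
    refine iSup_le fun hw => ?_
    rw [ENNReal.mul_iSup, ENNReal.mul_iSup]
    refine iSup_le fun v => ?_
    rw [ENNReal.mul_iSup, ENNReal.mul_iSup]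
    refine iSup_le fun hv => ?_
    rw [← mul_assoc]
    exact_mod_cast det_point_bound hr hs F G τ₁ τ₂ TF TG hTFb hTGb z hz
      w hw.1 v hv.1 hw.2 hv.2
  have hsle : s ≤ r * s := Nat.le_mul_of_pos_left s hr
  have hrle : r ≤ r * s := Nat.le_mul_of_pos_right r hs
  rw [hTFc, hTGc] at hmain ⊢
  have hc0 : ((TF : ℝ≥0∞) ^ (r * s - s) * (TG : ℝ≥0∞) ^ (r * s - r)) ≠ 0 :=
    mul_ne_zero (pow_ne_zero _ (by exact_mod_cast hTF0))
      (pow_ne_zero _ (by exact_mod_cast hTG0))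
  have hct : ((TF : ℝ≥0∞) ^ (r * s - s) * (TG : ℝ≥0∞) ^ (r * s - r)) ≠ ⊤ :=
    ENNReal.mul_ne_top (ENNReal.pow_ne_top ENNReal.coe_ne_top)
      (ENNReal.pow_ne_top ENNReal.coe_ne_top)
  rw [← ENNReal.mul_le_mul_iff_left hc0 hct]
  have e1 : (TF : ℝ≥0∞) ^ (r * s) = TF ^ s * TF ^ (r * s - s) := by
    rw [← pow_add, Nat.add_sub_cancel' hsle]
  have e2 : (TG : ℝ≥0∞) ^ (r * s) = TG ^ r * TG ^ (r * s - r) := by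
    rw [← pow_add, Nat.add_sub_cancel' hrle]
  calc (‖(Matrix.of fun i (j : Fin r × Fin s) =>
        F j.1 (z i).1 * G j.2 (z i).2).det‖₊ : ℝ≥0∞)
        * ((TF : ℝ≥0∞) ^ (r * s - s) * (TG : ℝ≥0∞) ^ (r * s - r))
      = (‖(Matrix.of fun i (j : Fin r × Fin s) =>
          F j.1 (z i).1 * G j.2 (z i).2).det‖₊ : ℝ≥0∞)
          * (TF : ℝ≥0∞) ^ (r * s - s) * (TG : ℝ≥0∞) ^ (r * s - r) := by ring
    _ ≤ ((r * s)! : ℝ≥0∞) * (TF : ℝ≥0∞) ^ (r * s) * (TG : ℝ≥0∞) ^ (r * s) := hmain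
    _ = ((r * s)! : ℝ≥0∞) * (TF : ℝ≥0∞) ^ s * (TG : ℝ≥0∞) ^ r
          * ((TF : ℝ≥0∞) ^ (r * s - s) * (TG : ℝ≥0∞) ^ (r * s - r)) := by
        rw [e1, e2]; ring

end Upper


end VandAux

section Limits

lemma tendsto_rpow_aux {u : ℕ → ℝ≥0∞} {a : ℕ → ℝ} {A : ℝ≥0∞} {α : ℝ}
    (hut : ∀ n, u n ≠ ⊤) (ha : ∀ n, 0 < a n) (hα0 : 0 ≤ α)
    (hu : Tendsto u atTop (nhds A)) (hA0 : A ≠ 0) (hAt : A ≠ ⊤)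
    (hα : Tendsto a atTop (nhds α)) :
    Tendsto (fun n => u n ^ a n) atTop (nhds (A ^ α)) := by
  have h1 : Tendsto (fun n => (u n).toReal) atTop (nhds A.toReal) :=
    (ENNReal.tendsto_toReal hAt).comp hu
  have h2 : Tendsto (fun n => (u n).toReal ^ a n) atTop (nhds (A.toReal ^ α)) :=
    h1.rpow hα (Or.inl (by simp [ENNReal.toReal_ne_zero, hA0, hAt]))
  have h3 := ENNReal.tendsto_ofReal h2
  have he : ∀ n, ENNReal.ofReal ((u n).toReal ^ a n) = u n ^ a n := fun n => by
    rw [ENNReal.toReal_rpow,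
      ENNReal.ofReal_toReal (ENNReal.rpow_ne_top_of_nonneg (ha n).le (hut n))]
  have hA' : ENNReal.ofReal (A.toReal ^ α) = A ^ α := by
    rw [ENNReal.toReal_rpow, ENNReal.ofReal_toReal (ENNReal.rpow_ne_top_of_nonneg hα0 hAt)]
  rw [← hA']
  exact h3.congr he

lemma tendsto_fact_rpow (r s : ℕ → ℕ) (hr : ∀ n, 1 ≤ r n) (hs : ∀ n, 1 ≤ s n)
    (eH : ℕ → ℕ) (heH : ∀ n, 0 < eH n)
    (hgrow : Tendsto
      (fun n => (eH n : ℝ) / (((r n : ℝ) * (s n : ℝ)) * Real.log ((r n : ℝ) * (s n : ℝ))))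
      atTop atTop) :
    Tendsto (fun n => (((r n * s n)! : ℕ) : ℝ≥0∞) ^ (1 / (eH n : ℝ))) atTop (nhds 1) := by
  have hc : Tendsto (fun n => Real.log (((r n * s n)! : ℕ) : ℝ) / (eH n : ℝ))
      atTop (nhds 0) := by
    have hinv : Tendsto
        (fun n => (((r n : ℝ) * (s n : ℝ)) * Real.log ((r n : ℝ) * (s n : ℝ))) / (eH n : ℝ))
        atTop (nhds 0) := by
      have h := hgrow.inv_tendsto_atTop
      refine h.congr fun n => ?_
      simp only [Pi.inv_apply, inv_div]
    refine tendsto_of_tendsto_of_tendsto_of_le_of_le tendsto_const_nhds hinv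
      (fun n => ?_) (fun n => ?_)
    · have h1 : (1 : ℝ) ≤ (((r n * s n)! : ℕ) : ℝ) := by
        exact_mod_cast Nat.one_le_iff_ne_zero.2 (Nat.factorial_pos _).ne'
      have := Real.log_nonneg h1
      positivity
    · have hN1 : 1 ≤ r n * s n := Nat.mul_pos (hr n) (hs n)
      have hfl : ((r n * s n)! : ℕ) ≤ (r n * s n) ^ (r n * s n) := Nat.factorial_le_pow _
      have hlog : Real.log (((r n * s n)! : ℕ) : ℝ) ≤
          ((r n : ℝ) * (s n : ℝ)) * Real.log ((r n : ℝ) * (s n : ℝ)) := by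
        calc Real.log (((r n * s n)! : ℕ) : ℝ)
            ≤ Real.log ((((r n * s n) ^ (r n * s n) : ℕ) : ℝ)) := by
              refine (Real.log_le_log_iff ?_ ?_).2 (by exact_mod_cast hfl)
              · exact_mod_cast (r n * s n).factorial_pos
              · have := hN1; positivity
          _ = ((r n : ℝ) * (s n : ℝ)) * Real.log ((r n : ℝ) * (s n : ℝ)) := by
              push_cast
              rw [Real.log_pow]
              push_cast
              ring
      have heHpos : (0 : ℝ) < (eH n : ℝ) := by exact_mod_cast heH n
      exact div_le_div_of_nonneg_right hlog heHpos.le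
  have hexp : Tendsto (fun n => Real.exp (Real.log (((r n * s n)! : ℕ) : ℝ) / (eH n : ℝ)))
      atTop (nhds 1) := by
    have h := (Real.continuous_exp.tendsto 0).comp hc
    simpa [Function.comp_def] using h
  have h4 := ENNReal.tendsto_ofReal hexp
  rw [ENNReal.ofReal_one] at h4
  refine Tendsto.congr (fun n => ?_) h4
  have hNpos : (0 : ℝ) < (((r n * s n)! : ℕ) : ℝ) := by exact_mod_cast (r n * s n).factorial_pos
  rw [← ENNReal.ofReal_natCast, ENNReal.ofReal_rpow_of_pos hNpos,
    Real.rpow_def_of_pos hNpos, mul_one_div]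

end Limits

/-- Multiplicativity of the supremal transfinite diameter for
external products: if `t_{F_n}(τ₁)^{1/e^F_n} → A` and `t_{G_n}(τ₂)^{1/e^G_n} → B`,
then `t_{H_n}(τ₁ × τ₂)^{1/e^H_n} → A^{α₁} · B^{α₂}` where `H_n` is the list of
external products `(x, y) ↦ f(x)g(y)`. -/
theorem tendsto_vandSup_external_product
    (p q : ℕ) (hp : 1 ≤ p) (hq : 1 ≤ q)
    (r s : ℕ → ℕ) (hr : ∀ n, 1 ≤ r n) (hs : ∀ n, 1 ≤ s n)
    (F : ∀ n, Fin (r n) → (Fin p → ℂ) → ℂ) (G : ∀ n, Fin (s n) → (Fin q → ℂ) → ℂ)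
    (τ₁ : Set (Fin p → ℂ)) (τ₂ : Set (Fin q → ℂ))
    (eF eG eH : ℕ → ℕ)
    (heF : ∀ n, 0 < eF n) (heG : ∀ n, 0 < eG n) (heH : ∀ n, 0 < eH n)
    (hgrow : Tendsto
      (fun n => (eH n : ℝ) / (((r n : ℝ) * (s n : ℝ)) * Real.log ((r n : ℝ) * (s n : ℝ))))
      atTop atTop)
    (α₁ α₂ : ℝ) (hα₁ : 0 ≤ α₁) (hα₂ : 0 ≤ α₂)
    (hαlim : Tendsto (fun n => ((eF n : ℝ) * (s n : ℝ)) / (eH n : ℝ)) atTop (nhds α₁))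
    (hβlim : Tendsto (fun n => ((eG n : ℝ) * (r n : ℝ)) / (eH n : ℝ)) atTop (nhds α₂))
    (hFfin : ∀ n, vandSup τ₁ (F n) ≠ ⊤) (hGfin : ∀ n, vandSup τ₂ (G n) ≠ ⊤)
    (A B : ℝ≥0∞)
    (hA : Tendsto (fun n => vandSup τ₁ (F n) ^ (1 / (eF n : ℝ))) atTop (nhds A))
    (hB : Tendsto (fun n => vandSup τ₂ (G n) ^ (1 / (eG n : ℝ))) atTop (nhds B))
    (hA0 : 0 < A) (hAtop : A ≠ ⊤) (hB0 : 0 < B) (hBtop : B ≠ ⊤) :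
    Tendsto (fun n =>
        vandSup (τ₁ ×ˢ τ₂)
            (fun pr : Fin (r n) × Fin (s n) =>
              fun z : (Fin p → ℂ) × (Fin q → ℂ) => F n pr.1 z.1 * G n pr.2 z.2)
          ^ (1 / (eH n : ℝ))) atTop
      (nhds (A ^ α₁ * B ^ α₂)) := by
  classical
  have heHnn : ∀ n, (0:ℝ) ≤ 1 / (eH n : ℝ) := fun n => by positivity
  set L : ℕ → ℝ≥0∞ := fun n =>
    (vandSup τ₁ (F n) ^ (s n) * vandSup τ₂ (G n) ^ (r n)) ^ (1 / (eH n : ℝ)) with hLdef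
  set ψ : ℕ → ℝ≥0∞ := fun n => (((r n * s n)! : ℕ) : ℝ≥0∞) ^ (1 / (eH n : ℝ)) with hψdef
  -- decomposition of L
  have hLeq : ∀ n, L n =
      (vandSup τ₁ (F n) ^ (1 / (eF n : ℝ))) ^ (((eF n : ℝ) * (s n : ℝ)) / (eH n : ℝ)) *
      (vandSup τ₂ (G n) ^ (1 / (eG n : ℝ))) ^ (((eG n : ℝ) * (r n : ℝ)) / (eH n : ℝ)) := by
    intro n
    have heFn : (eF n : ℝ) ≠ 0 := by
      have := heF n; positivity
    have heGn : (eG n : ℝ) ≠ 0 := by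
      have := heG n; positivity
    simp only [hLdef]
    rw [ENNReal.mul_rpow_of_nonneg _ _ (heHnn n),
      ← ENNReal.rpow_natCast (vandSup τ₁ (F n)) (s n),
      ← ENNReal.rpow_natCast (vandSup τ₂ (G n)) (r n),
      ← ENNReal.rpow_mul, ← ENNReal.rpow_mul, ← ENNReal.rpow_mul, ← ENNReal.rpow_mul]
    congr 1
    · congr 1
      field_simp
    · congr 1
      field_simp
  -- limits of the two factors
  have hAα : Tendsto (fun n =>
      (vandSup τ₁ (F n) ^ (1 / (eF n : ℝ))) ^ (((eF n : ℝ) * (s n : ℝ)) / (eH n : ℝ)))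
      atTop (nhds (A ^ α₁)) := by
    refine tendsto_rpow_aux (fun n => ?_) (fun n => ?_) hα₁ hA hA0.ne' hAtop hαlim
    · exact ENNReal.rpow_ne_top_of_nonneg (by positivity) (hFfin n)
    · have h1 := heF n; have h2 := hs n; have h3 := heH n
      have : (0:ℝ) < (eF n : ℝ) * (s n : ℝ) := by positivity
      positivity
  have hBα : Tendsto (fun n =>
      (vandSup τ₂ (G n) ^ (1 / (eG n : ℝ))) ^ (((eG n : ℝ) * (r n : ℝ)) / (eH n : ℝ)))
      atTop (nhds (B ^ α₂)) := by
    refine tendsto_rpow_aux (fun n => ?_) (fun n => ?_) hα₂ hB hB0.ne' hBtop hβlim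
    · exact ENNReal.rpow_ne_top_of_nonneg (by positivity) (hGfin n)
    · have h1 := heG n; have h2 := hr n; have h3 := heH n
      have : (0:ℝ) < (eG n : ℝ) * (r n : ℝ) := by positivity
      positivity
  have hAαt : A ^ α₁ ≠ ⊤ := ENNReal.rpow_ne_top_of_nonneg hα₁ hAtop
  have hBαt : B ^ α₂ ≠ ⊤ := ENNReal.rpow_ne_top_of_nonneg hα₂ hBtop
  have hAα0 : A ^ α₁ ≠ 0 := (ENNReal.rpow_pos hA0 hAtop).ne'
  have hBα0 : B ^ α₂ ≠ 0 := (ENNReal.rpow_pos hB0 hBtop).ne'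
  have hL : Tendsto L atTop (nhds (A ^ α₁ * B ^ α₂)) := by
    refine Tendsto.congr (fun n => (hLeq n).symm) ?_
    exact ENNReal.Tendsto.mul hAα (Or.inl hAα0) hBα (Or.inr hAαt)
  -- the factorial factor
  have hψ : Tendsto ψ atTop (nhds 1) := tendsto_fact_rpow r s hr hs eH heH hgrow
  have hψL : Tendsto (fun n => ψ n * L n) atTop (nhds (A ^ α₁ * B ^ α₂)) := by
    have := ENNReal.Tendsto.mul hψ (Or.inl one_ne_zero) hL
      (Or.inr (by simp : (1:ℝ≥0∞) ≠ ⊤))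
    simpa using this
  -- eventual nonvanishing
  have hFev : ∀ᶠ n in atTop, vandSup τ₁ (F n) ≠ 0 := by
    filter_upwards [hA.eventually (eventually_gt_nhds hA0)] with n hn h0
    rw [h0, ENNReal.zero_rpow_of_pos (by have := heF n; positivity)] at hn
    exact lt_irrefl _ hn
  have hGev : ∀ᶠ n in atTop, vandSup τ₂ (G n) ≠ 0 := by
    filter_upwards [hB.eventually (eventually_gt_nhds hB0)] with n hn h0
    rw [h0, ENNReal.zero_rpow_of_pos (by have := heG n; positivity)] at hn
    exact lt_irrefl _ hn
  -- sandwich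
  refine tendsto_of_tendsto_of_tendsto_of_le_of_le' hL hψL
    (Eventually.of_forall fun n => ?_) ?_
  · exact ENNReal.rpow_le_rpow
      (VandAux.lower (hr n) (hs n) (F n) (G n) τ₁ τ₂) (heHnn n)
  · filter_upwards [hFev, hGev] with n hF0 hG0
    calc vandSup (τ₁ ×ˢ τ₂)
          (fun pr : Fin (r n) × Fin (s n) =>
            fun z : (Fin p → ℂ) × (Fin q → ℂ) => F n pr.1 z.1 * G n pr.2 z.2)
          ^ (1 / (eH n : ℝ))
        ≤ ((((r n * s n)! : ℕ) : ℝ≥0∞) *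
            (vandSup τ₁ (F n) ^ (s n) * vandSup τ₂ (G n) ^ (r n))) ^ (1 / (eH n : ℝ)) := by
          refine ENNReal.rpow_le_rpow ?_ (heHnn n)
          have := VandAux.upper (hr n) (hs n) (F n) (G n) τ₁ τ₂
            (hFfin n) (hGfin n) hF0 hG0
          rwa [mul_assoc] at this
      _ = ψ n * L n := by
          rw [ENNReal.mul_rpow_of_nonneg _ _ (heHnn n)]
end

section
/- In the polynomial ring ℤ[X, Y] in two variables over ℤ, the family of polynomials (XY)^i (X+Y)^j X^k, indexed by pairs (i, j) of non-negative integers and k ∈ {0, 1}, is a ℤ-module basis of ℤ[X, Y]. Equivalently, the natural ℤ-linear map ℤ[XY, X+Y] ⊗_ℤ (ℤ ⊕ ℤX) → ℤ[X, Y] induced by multiplication is an isomorphism of ℤ-modules. -/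
open MvPolynomial

namespace BasisXYAux

noncomputable abbrev R2 := MvPolynomial (Fin 2) ℤ

/-- The family `(XY)^i (X+Y)^j X^k`. -/
noncomputable def vf : ℕ × ℕ × Fin 2 → R2 := fun p =>
  (X 0 * X 1 : R2) ^ p.1 * (X 0 + X 1) ^ p.2.1 * (X 0) ^ (p.2.2 : ℕ)

/-- The elementary symmetric polynomials family used by `esymmAlgHom`. -/
noncomputable def S : Fin 2 → R2 := fun i => esymm (Fin 2) ℤ (i + 1)

lemma S_zero : S 0 = X 0 + X 1 := by
  simp [S, esymm_one, Fin.sum_univ_two]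

lemma S_one : S 1 = X 0 * X 1 := by
  have h2 : ((1 : Fin 2) : ℕ) + 1 = (Finset.univ : Finset (Fin 2)).card := by simp
  rw [S, esymm, h2, Finset.powersetCard_self]
  simp [Fin.prod_univ_two]

lemma aeval_S_injective : Function.Injective (aeval S : R2 →ₐ[ℤ] R2) := by
  have h : Function.Injective (esymmAlgHom (Fin 2) ℤ 2) :=
    esymmAlgHom_injective ℤ (by simp)
  have key : ∀ p : R2, (aeval S : R2 →ₐ[ℤ] R2) p = ((esymmAlgHom (Fin 2) ℤ 2) p).val := by
    intro p
    rw [esymmAlgHom_apply]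
    rfl
  intro a b hab
  apply h
  apply Subtype.val_injective
  rw [← key, ← key]
  exact hab

/-- The multiplication linear map `(P, Q) ↦ P(e₂,e₁) + Q(e₂,e₁) * X 0`. -/
noncomputable def L : (R2 × R2) →ₗ[ℤ] R2 where
  toFun pq := aeval S pq.1 + aeval S pq.2 * X 0
  map_add' x y := by
    simp only [Prod.fst_add, Prod.snd_add, map_add]
    ring
  map_smul' c x := by
    simp only [Prod.smul_fst, Prod.smul_snd, map_zsmul, RingHom.id_apply]
    rw [smul_mul_assoc, ← smul_add]

lemma L_apply (P Q : R2) : L (P, Q) = aeval S P + aeval S Q * X 0 := rfl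

lemma swap_S : (fun i => rename (Equiv.swap (0 : Fin 2) 1) (S i)) = S := by
  funext i
  exact esymm_isSymmetric (Fin 2) ℤ _ (Equiv.swap 0 1)

lemma ker_L : LinearMap.ker L = ⊥ := by
  rw [LinearMap.ker_eq_bot']
  rintro ⟨P, Q⟩ h
  rw [L_apply] at h
  have h0 : aeval S P + aeval S Q * X 0 = 0 := h
  have hswap : aeval S P + aeval S Q * X 1 = 0 := by
    have h1 := congrArg (rename (Equiv.swap (0 : Fin 2) 1)) h0
    rw [map_add, map_mul, map_zero, rename_X, Equiv.swap_apply_left] at h1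
    have hP : rename (Equiv.swap (0 : Fin 2) 1) (aeval S P) = aeval S P := by
      rw [show (rename (Equiv.swap (0:Fin 2) 1)) ((aeval S) P)
          = ((rename (Equiv.swap (0:Fin 2) 1)).comp (aeval S)) P from rfl,
        comp_aeval, swap_S]
    have hQ : rename (Equiv.swap (0 : Fin 2) 1) (aeval S Q) = aeval S Q := by
      rw [show (rename (Equiv.swap (0:Fin 2) 1)) ((aeval S) Q)
          = ((rename (Equiv.swap (0:Fin 2) 1)).comp (aeval S)) Q from rfl,
        comp_aeval, swap_S]
    rwa [hP, hQ] at h1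
  have hsub : aeval S Q * (X 1 - X 0) = 0 := by
    linear_combination hswap - h0
  have hX : (X 1 - X 0 : R2) ≠ 0 := by
    intro hxy
    have := sub_eq_zero.mp hxy
    exact (by simp : (1 : Fin 2) ≠ 0) (X_injective this)
  have hQ0 : aeval S Q = 0 := by
    rcases mul_eq_zero.mp hsub with h' | h'
    · exact h'
    · exact absurd h' hX
  have hQ : Q = 0 := aeval_S_injective (by rw [hQ0, map_zero])
  have hP : P = 0 := by
    apply aeval_S_injective
    rw [map_zero]
    rw [hQ0, zero_mul, add_zero] at h0
    exact h0
  simp [hP, hQ, Prod.ext_iff]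

noncomputable def B : Module.Basis ((Fin 2 →₀ ℕ) ⊕ (Fin 2 →₀ ℕ)) ℤ (R2 × R2) :=
  (basisMonomials (Fin 2) ℤ).prod (basisMonomials (Fin 2) ℤ)

noncomputable def df : ℕ × ℕ × Fin 2 → (Fin 2 →₀ ℕ) := fun p =>
  Finsupp.single 1 p.1 + Finsupp.single 0 p.2.1

noncomputable def gf : ℕ × ℕ × Fin 2 → (Fin 2 →₀ ℕ) ⊕ (Fin 2 →₀ ℕ) := fun p =>
  if p.2.2 = 0 then Sum.inl (df p) else Sum.inr (df p)

lemma df_inj : ∀ p q : ℕ × ℕ × Fin 2, df p = df q → p.1 = q.1 ∧ p.2.1 = q.2.1 := by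
  intro p q h
  constructor
  · have := DFunLike.congr_fun h 1
    simpa [df, Finsupp.single_apply] using this
  · have := DFunLike.congr_fun h 0
    simpa [df, Finsupp.single_apply] using this

lemma gf_inj : Function.Injective gf := by
  rintro ⟨i, j, k⟩ ⟨i', j', k'⟩ h
  fin_cases k <;> fin_cases k' <;> simp [gf] at h <;>
    · obtain ⟨h1, h2⟩ := df_inj _ _ h
      simp_all

lemma monomial_df (i j : ℕ) (k : Fin 2) :
    (monomial (df (i, j, k)) (1 : ℤ) : R2) = X 1 ^ i * X 0 ^ j := by
  rw [X_pow_eq_monomial, X_pow_eq_monomial, monomial_mul, one_mul]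
  rfl

lemma vf_linearIndependent : LinearIndependent ℤ vf := by
  have hind : LinearIndependent ℤ (⇑L ∘ ⇑B ∘ gf) :=
    ((B.linearIndependent.comp gf gf_inj).map' L ker_L)
  have hcomp : (⇑L ∘ ⇑B ∘ gf) = vf := by
    funext p
    obtain ⟨i, j, k⟩ := p
    fin_cases k
    · show L (B (Sum.inl (df (i, j, 0)))) = vf (i, j, 0)
      have hBval : B (Sum.inl (df (i, j, 0))) = (monomial (df (i, j, 0)) 1, 0) := by
        refine Prod.ext ?_ (Module.Basis.prod_apply_inl_snd _ _ _)
        rw [B, Module.Basis.prod_apply_inl_fst]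
        exact congrFun (coe_basisMonomials _ _) _
      rw [hBval, L_apply, map_zero, zero_mul, add_zero, monomial_df, map_mul,
        map_pow, map_pow, aeval_X, aeval_X, S_zero, S_one]
      simp [vf]
    · show L (B (Sum.inr (df (i, j, 1)))) = vf (i, j, 1)
      have hBval : B (Sum.inr (df (i, j, 1))) = (0, monomial (df (i, j, 1)) 1) := by
        refine Prod.ext (Module.Basis.prod_apply_inr_fst _ _ _) ?_
        rw [B, Module.Basis.prod_apply_inr_snd]
        exact congrFun (coe_basisMonomials _ _) _
      rw [hBval, L_apply, map_zero, zero_add, monomial_df, map_mul,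
        map_pow, map_pow, aeval_X, aeval_X, S_zero, S_one]
      simp [vf]
  rwa [hcomp] at hind

lemma vf_mem (p : ℕ × ℕ × Fin 2) : vf p ∈ Submodule.span ℤ (Set.range vf) :=
  Submodule.subset_span (Set.mem_range_self p)

lemma vf_mul_mem (p q : ℕ × ℕ × Fin 2) :
    vf p * vf q ∈ Submodule.span ℤ (Set.range vf) := by
  obtain ⟨i, j, k⟩ := p
  obtain ⟨i', j', k'⟩ := q
  fin_cases k <;> fin_cases k'
  · have := vf_mem (i + i', j + j', 0)
    convert this using 1
    simp only [vf, Fin.val_zero, Fin.val_one, pow_zero, pow_one]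
    ring
  · have := vf_mem (i + i', j + j', 1)
    convert this using 1
    simp only [vf, Fin.val_zero, Fin.val_one, pow_zero, pow_one]
    ring
  · have := vf_mem (i + i', j + j', 1)
    convert this using 1
    simp only [vf, Fin.val_zero, Fin.val_one, pow_zero, pow_one]
    ring
  · have h1 := vf_mem (i + i', j + j' + 1, 1)
    have h2 := vf_mem (i + i' + 1, j + j', 0)
    have := Submodule.sub_mem _ h1 h2
    convert this using 1
    simp only [vf, Fin.val_zero, Fin.val_one, pow_zero, pow_one]
    ring

lemma vf_span : Submodule.span ℤ (Set.range vf) = ⊤ := by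
  set N := Submodule.span ℤ (Set.range vf) with hN
  have hone : (1 : R2) ∈ N := by
    have := vf_mem (0, 0, 0)
    simpa [vf] using this
  have hX0 : (X 0 : R2) ∈ N := by
    have := vf_mem (0, 0, 1)
    simpa [vf] using this
  have hX1 : (X 1 : R2) ∈ N := by
    have h1 := vf_mem (0, 1, 0)
    simp only [vf, pow_zero, pow_one, one_mul] at h1
    have h2 := N.sub_mem h1 hX0
    simpa using h2
  have hmul : ∀ a ∈ N, ∀ b ∈ N, a * b ∈ N := by
    intro a ha b hb
    have h1 : a * b ∈ N * N := Submodule.mul_mem_mul ha hb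
    have h2 : N * N ≤ N := by
      rw [hN, Submodule.span_mul_span, Submodule.span_le]
      rintro x ⟨y, ⟨p, rfl⟩, z, ⟨q, rfl⟩, rfl⟩
      exact vf_mul_mem p q
    exact h2 h1
  rw [Submodule.eq_top_iff']
  intro p
  induction p using MvPolynomial.induction_on with
  | C a =>
    have h : (C a : R2) = a • 1 := by rw [smul_eq_C_mul, mul_one]
    rw [h]
    exact N.smul_mem a hone
  | add f g hf hg => exact N.add_mem hf hg
  | mul_X f n hf =>
    apply hmul _ hf
    fin_cases n
    · exact hX0
    · exact hX1

end BasisXYAux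

open BasisXYAux in
/-- In `ℤ[X, Y]`, the family `(XY)^i (X+Y)^j X^k` for `i, j ≥ 0`
and `k ∈ {0, 1}` is a `ℤ`-module basis: it is linearly independent over `ℤ` and
spans `ℤ[X, Y]` as a `ℤ`-module. -/
theorem basis_xy_xplusy :
    LinearIndependent ℤ
      (fun p : ℕ × ℕ × Fin 2 =>
        (X 0 * X 1 : MvPolynomial (Fin 2) ℤ) ^ p.1
          * (X 0 + X 1) ^ p.2.1 * (X 0) ^ (p.2.2 : ℕ)) ∧
    Submodule.span ℤ
      (Set.range fun p : ℕ × ℕ × Fin 2 =>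
        (X 0 * X 1 : MvPolynomial (Fin 2) ℤ) ^ p.1
          * (X 0 + X 1) ^ p.2.1 * (X 0) ^ (p.2.2 : ℕ)) = ⊤ :=
  ⟨vf_linearIndependent, vf_span⟩
end
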